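/- arXiv:1403.5378 — 6 statements merged into one kernel-verified Lean document; each statement's English description precedes it below -/
import Mathlib

section
/- If p(t) and q(t) are polynomials with nonnegative, symmetric, and unimodal coefficient sequences, then their product p(t)q(t) also has nonnegative, symmetric, and unimodal coefficients. -/
open Finset Polynomial

private def zext (a : ℕ → ℝ) : ℤ → ℝ := fun z => if z < 0 then 0 else a z.toNat
private lemma zext_nat (a : ℕ → ℝ) (n : ℕ) : zext a n = a n := by simp [zext]
private lemma zext_neg (a : ℕ → ℝ) {z : ℤ} (h : z < 0) : zext a z = 0 := if_pos h
private lemma zext_nonneg {a : ℕ → ℝ} (h : ∀ n, 0 ≤ a n) (z : ℤ) : 0 ≤ zext a z := by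
  unfold zext; split
  · exact le_refl 0
  · exact h _
private lemma zext_gt {a : ℕ → ℝ} {d : ℕ} (hz : ∀ n, d < n → a n = 0) {z : ℤ}
    (h : (d : ℤ) < z) : zext a z = 0 := by
  unfold zext; rw [if_neg (by omega)]; exact hz _ (by omega)
private lemma zext_sym {a : ℕ → ℝ} {d : ℕ} (hz : ∀ n, d < n → a n = 0)
    (hs : ∀ i ≤ d, a i = a (d - i)) (z : ℤ) : zext a z = zext a (d - z) := by
  by_cases h : z < 0
  · rw [zext_neg a h, zext_gt hz (by omega)]
  · by_cases hd : z ≤ (d : ℤ)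
    · unfold zext
      rw [if_neg (by omega), if_neg (by omega)]
      have h1 : ((d : ℤ) - z).toNat = d - z.toNat := by omega
      rw [h1]
      exact hs z.toNat (by omega)
    · rw [zext_gt hz (by omega), zext_neg a (by omega)]
private lemma zext_mono {a : ℕ → ℝ} {d : ℕ} (h0 : ∀ n, 0 ≤ a n)
    (hm : ∀ u v : ℕ, u ≤ v → u + v ≤ d → a u ≤ a v) {u v : ℤ}
    (huv : u ≤ v) (hsum : u + v ≤ (d : ℤ)) : zext a u ≤ zext a v := by
  by_cases hu : u < 0
  · rw [zext_neg a hu]; exact zext_nonneg h0 v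
  · unfold zext
    rw [if_neg hu, if_neg (by omega)]
    exact hm u.toNat v.toNat (by omega) (by omega)

private lemma czsum_base (a b : ℕ → ℝ) (n : ℕ) :
    ∑ k ∈ range (n+1), a k * b (n - k)
      = ∑ j ∈ Finset.Icc (0:ℤ) (n:ℤ), zext a ((n:ℤ) - j) * zext b j := by
  refine Finset.sum_nbij' (fun k => ((n - k : ℕ) : ℤ)) (fun z => n - z.toNat) ?_ ?_ ?_ ?_ ?_
  · intro k hk; simp only [Finset.mem_range] at hk; simp only [Finset.mem_Icc]; omega
  · intro z hz; simp only [Finset.mem_Icc] at hz; simp only [Finset.mem_range]; omega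
  · intro k hk; simp only [Finset.mem_range] at hk
    show (n : ℕ) - ((n - k : ℕ) : ℤ).toNat = k
    omega
  · intro z hz; simp only [Finset.mem_Icc] at hz
    show ((n - ((n:ℕ) - z.toNat) : ℕ) : ℤ) = z
    omega
  · intro k hk; simp only [Finset.mem_range] at hk
    have h1 : ((n:ℤ) - ((n - k : ℕ) : ℤ)) = ((k : ℕ) : ℤ) := by omega
    rw [h1, zext_nat, zext_nat]

private lemma czsum {a b : ℕ → ℝ} {e : ℕ}
    (hbz : ∀ n, e < n → b n = 0)
    (n : ℕ) (L R : ℤ) (hL : L ≤ 0) (hR : (n:ℤ) ≤ R ∨ (e:ℤ) ≤ R) :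
    ∑ k ∈ range (n+1), a k * b (n - k)
      = ∑ j ∈ Finset.Icc L R, zext a ((n:ℤ) - j) * zext b j := by
  rw [czsum_base]
  have hz : ∀ j : ℤ, (j < 0 ∨ (n:ℤ) < j ∧ (e:ℤ) < j ∨ ((n:ℤ) ≤ R ∧ (n:ℤ) < j) ∨ ((e:ℤ) ≤ R ∧ (e:ℤ) < j)) → zext a ((n:ℤ) - j) * zext b j = 0 := by
    intro j hj
    rcases hj with h | h | h | h
    · rw [zext_neg b h, mul_zero]
    · rw [zext_neg a (by omega), zero_mul]
    · rw [zext_neg a (by omega), zero_mul]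
    · rw [zext_gt hbz h.2, mul_zero]
  rw [Finset.sum_subset (Finset.Icc_subset_Icc (by omega) (by omega) :
        Finset.Icc (0:ℤ) (n:ℤ) ⊆ Finset.Icc (min L 0) (max R n)) ?h1,
      ← Finset.sum_subset (Finset.Icc_subset_Icc (by omega) (by omega) :
        Finset.Icc L R ⊆ Finset.Icc (min L 0) (max R n)) ?h2]
  case h1 =>
    intro x hx hnx
    simp only [Finset.mem_Icc] at hx hnx
    exact hz x (by omega)
  case h2 =>
    intro x hx hnx
    simp only [Finset.mem_Icc] at hx hnx
    rcases hR with h | h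
    · exact hz x (by omega)
    · exact hz x (by omega)

private lemma csym {a b : ℕ → ℝ} {d e : ℕ}
    (haz : ∀ n, d < n → a n = 0) (hbz : ∀ n, e < n → b n = 0)
    (hasym : ∀ i ≤ d, a i = a (d - i)) (hbsym : ∀ i ≤ e, b i = b (e - i))
    (n : ℕ) (hn : n ≤ d + e) :
    ∑ k ∈ range (n+1), a k * b (n - k)
      = ∑ k ∈ range ((d+e-n)+1), a k * b ((d+e-n) - k) := by
  rw [czsum hbz n 0 e le_rfl (Or.inr le_rfl),
      czsum hbz (d+e-n) 0 e le_rfl (Or.inr le_rfl)]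
  refine Finset.sum_nbij' (fun j => (e:ℤ) - j) (fun j => (e:ℤ) - j) ?_ ?_ ?_ ?_ ?_
  · intro j hj; simp only [Finset.mem_Icc] at *; omega
  · intro j hj; simp only [Finset.mem_Icc] at *; omega
  · intro j hj; show (e:ℤ) - ((e:ℤ) - j) = j; ring
  · intro j hj; show (e:ℤ) - ((e:ℤ) - j) = j; ring
  · intro j hj
    simp only [Finset.mem_Icc] at hj
    have hA : zext a ((n:ℤ) - j) = zext a (((d+e-n:ℕ):ℤ) - ((e:ℤ) - j)) := by
      rw [zext_sym haz hasym ((n:ℤ) - j)]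
      congr 1
      omega
    have hB : zext b j = zext b ((e:ℤ) - j) := by
      rw [zext_sym hbz hbsym j]
    rw [hA, hB]

private lemma cstep {a b : ℕ → ℝ} {d e : ℕ}
    (ha0 : ∀ n, 0 ≤ a n) (hb0 : ∀ n, 0 ≤ b n)
    (_haz : ∀ n, d < n → a n = 0) (hbz : ∀ n, e < n → b n = 0)
    (hbsym : ∀ i ≤ e, b i = b (e - i))
    (hamono : ∀ u v : ℕ, u ≤ v → u + v ≤ d → a u ≤ a v)
    (hbmono : ∀ u v : ℕ, u ≤ v → u + v ≤ e → b u ≤ b v)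
    (m : ℕ) (hm : 2 * (m + 1) ≤ d + e) :
    ∑ k ∈ range (m+1), a k * b (m - k) ≤ ∑ k ∈ range (m+1+1), a k * b (m+1-k) := by
  set R : ℤ := (m : ℤ) + (e : ℤ) + 2 with hRdef
  have hc1 : ∑ k ∈ range (m+1+1), a k * b (m+1-k)
      = ∑ j ∈ Finset.Icc (0:ℤ) R, zext a (((m+1:ℕ):ℤ) - j) * zext b j :=
    czsum hbz (m+1) 0 R le_rfl (Or.inl (by push_cast; omega))
  have hc0 : ∑ k ∈ range (m+1), a k * b (m-k)
      = ∑ j ∈ Finset.Icc (-1:ℤ) (R-1), zext a ((m:ℤ) - j) * zext b j :=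
    czsum hbz m (-1) (R-1) (by omega) (Or.inl (by omega))
  have hshift : ∑ j ∈ Finset.Icc (-1:ℤ) (R-1), zext a ((m:ℤ) - j) * zext b j
      = ∑ j ∈ Finset.Icc (0:ℤ) R, zext a (((m+1:ℕ):ℤ) - j) * zext b (j-1) := by
    refine Finset.sum_nbij' (fun j => j + 1) (fun j => j - 1) ?_ ?_ ?_ ?_ ?_
    · intro j hj; simp only [Finset.mem_Icc] at *; omega
    · intro j hj; simp only [Finset.mem_Icc] at *; omega
    · intro j hj; show j + 1 - 1 = j; ring
    · intro j hj; show j - 1 + 1 = j; ring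
    · intro j hj
      have h1 : ((m:ℤ)) - j = ((m+1:ℕ):ℤ) - (j+1) := by push_cast; ring
      have h2 : j = j + 1 - 1 := by ring
      rw [← h1, ← h2]
  rw [hc0, hshift, hc1, ← sub_nonneg, ← Finset.sum_sub_distrib]
  set g : ℤ → ℝ := fun j => zext a (((m+1:ℕ):ℤ) - j) * zext b j
      - zext a (((m+1:ℕ):ℤ) - j) * zext b (j-1) with hgdef
  show 0 ≤ ∑ j ∈ Finset.Icc (0:ℤ) R, g j
  have hsplit := Finset.sum_filter_add_sum_filter_not (Finset.Icc (0:ℤ) R)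
      (fun j => 2*j ≤ (e:ℤ)) g
  rw [← hsplit]
  have hP2 : ∑ j ∈ (Finset.Icc (0:ℤ) R).filter (fun j => ¬ 2*j ≤ (e:ℤ)), g j
      = ∑ j ∈ (Finset.Icc (0:ℤ) R).filter
          (fun j => (e:ℤ)+2 ≤ 2*j ∧ j ≤ (e:ℤ)+1), g j := by
    symm
    refine Finset.sum_subset ?_ ?_
    · intro x hx; simp only [Finset.mem_filter, Finset.mem_Icc] at *; exact ⟨hx.1, by omega⟩
    · intro x hx hnx
      simp only [Finset.mem_filter, Finset.mem_Icc] at hx hnx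
      by_cases hmid : 2*x = (e:ℤ)+1
      · have hb1 : zext b x = zext b (x - 1) := by
          rw [zext_sym hbz hbsym x]
          congr 1
          omega
        rw [hgdef]
        show zext a (((m+1:ℕ):ℤ) - x) * zext b x - zext a (((m+1:ℕ):ℤ) - x) * zext b (x-1) = 0
        rw [hb1]; ring
      · have hx2 : (e:ℤ) + 2 ≤ 2*x := by omega
        have hxe : (e:ℤ) + 1 < x := by omega
        rw [hgdef]
        show zext a (((m+1:ℕ):ℤ) - x) * zext b x - zext a (((m+1:ℕ):ℤ) - x) * zext b (x-1) = 0
        rw [zext_gt hbz (by omega), zext_gt hbz (by omega)]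
        ring
  rw [hP2]
  have hbij : ∑ j ∈ (Finset.Icc (0:ℤ) R).filter
          (fun j => (e:ℤ)+2 ≤ 2*j ∧ j ≤ (e:ℤ)+1), g j
      = ∑ j ∈ (Finset.Icc (0:ℤ) R).filter (fun j => 2*j ≤ (e:ℤ)),
          g ((e:ℤ) + 1 - j) := by
    refine Finset.sum_nbij' (fun j => (e:ℤ) + 1 - j) (fun j => (e:ℤ) + 1 - j) ?_ ?_ ?_ ?_ ?_
    · intro j hj; simp only [Finset.mem_filter, Finset.mem_Icc] at *; omega
    · intro j hj; simp only [Finset.mem_filter, Finset.mem_Icc] at *; omega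
    · intro j hj; show (e:ℤ) + 1 - ((e:ℤ) + 1 - j) = j; ring
    · intro j hj; show (e:ℤ) + 1 - ((e:ℤ) + 1 - j) = j; ring
    · intro j hj
      show g j = g ((e:ℤ) + 1 - ((e:ℤ) + 1 - j))
      congr 1
      ring
  rw [hbij, ← Finset.sum_add_distrib]
  refine Finset.sum_nonneg ?_
  intro j hj
  simp only [Finset.mem_filter, Finset.mem_Icc] at hj
  obtain ⟨⟨hj0, hjR⟩, hje⟩ := hj
  rw [hgdef]
  show 0 ≤ (zext a (((m+1:ℕ):ℤ) - j) * zext b j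
      - zext a (((m+1:ℕ):ℤ) - j) * zext b (j-1))
      + (zext a (((m+1:ℕ):ℤ) - ((e:ℤ)+1-j)) * zext b ((e:ℤ)+1-j)
      - zext a (((m+1:ℕ):ℤ) - ((e:ℤ)+1-j)) * zext b ((e:ℤ)+1-j-1))
  have e1 : zext b ((e:ℤ)+1-j) = zext b (j-1) := by
    rw [zext_sym hbz hbsym ((e:ℤ)+1-j)]
    congr 1
    ring
  have e2 : zext b ((e:ℤ)+1-j-1) = zext b j := by
    rw [zext_sym hbz hbsym ((e:ℤ)+1-j-1)]
    congr 1
    ring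
  rw [e1, e2]
  have hA : zext a (((m+1:ℕ):ℤ) - ((e:ℤ)+1-j)) ≤ zext a (((m+1:ℕ):ℤ) - j) := by
    refine zext_mono ha0 hamono ?_ ?_ <;> push_cast <;> omega
  have hB : zext b (j-1) ≤ zext b j := by
    refine zext_mono hb0 hbmono ?_ ?_ <;> omega
  nlinarith [mul_nonneg (sub_nonneg.2 hA) (sub_nonneg.2 hB)]

private lemma nat_mono_of_sym_uni {f : ℕ → ℝ} {d k : ℕ}
    (hs : ∀ i ≤ d, f i = f (d - i)) (hk : k ≤ d)
    (h1 : ∀ i j, i ≤ j → j ≤ k → f i ≤ f j)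
    (h2 : ∀ i j, k ≤ i → i ≤ j → f j ≤ f i) :
    ∀ u v, u ≤ v → u + v ≤ d → f u ≤ f v := by
  intro u v huv hsum
  by_cases hvk : v ≤ k
  · exact h1 u v huv hvk
  · rw [hs u (by omega)]
    exact h2 v (d - u) (by omega) (by omega)

private lemma mono_of_inc_sym {f : ℕ → ℝ} {D : ℕ}
    (hs : ∀ i ≤ D, f i = f (D - i))
    (h1 : ∀ i j, i ≤ j → j ≤ D / 2 → f i ≤ f j) :
    ∀ u v, u ≤ v → u + v ≤ D → f u ≤ f v := by
  intro u v huv hsum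
  by_cases hv : v ≤ D / 2
  · exact h1 u v huv hv
  · rw [hs v (by omega)]
    exact h1 u (D - v) (by omega) (by omega)

private lemma anti_of_inc_sym {f : ℕ → ℝ} {D : ℕ}
    (h0 : ∀ n, 0 ≤ f n) (hz : ∀ n, D < n → f n = 0)
    (hs : ∀ i ≤ D, f i = f (D - i))
    (h1 : ∀ i j, i ≤ j → j ≤ D / 2 → f i ≤ f j) :
    ∀ i j, D / 2 ≤ i → i ≤ j → f j ≤ f i := by
  intro i j hi hij
  rcases eq_or_lt_of_le hij with rfl | hlt
  · exact le_refl _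
  by_cases hj : j ≤ D
  · rw [hs i (by omega), hs j hj]
    exact mono_of_inc_sym hs h1 (D - j) (D - i) (by omega) (by omega)
  · rw [hz j (by omega)]; exact h0 i

private lemma inc_of_step {f : ℕ → ℝ} {D : ℕ}
    (hstep : ∀ m, 2 * (m + 1) ≤ D → f m ≤ f (m + 1)) :
    ∀ i j, i ≤ j → j ≤ D / 2 → f i ≤ f j := by
  intro i j hij hj
  induction j, hij using Nat.le_induction with
  | base => exact le_refl _
  | succ n hn ih =>
    exact le_trans (ih (by omega)) (hstep n (by omega))


/-- If p(t) and q(t) are polynomials with nonnegative, symmetric, and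
unimodal coefficient sequences, then their product p(t)q(t) also has nonnegative,
symmetric, and unimodal coefficients. -/
theorem stmt_0 (p q : Polynomial ℝ)
    (hp0 : ∀ i, 0 ≤ p.coeff i) (hq0 : ∀ i, 0 ≤ q.coeff i)
    (hps : ∀ i ≤ p.natDegree, p.coeff i = p.coeff (p.natDegree - i))
    (hqs : ∀ i ≤ q.natDegree, q.coeff i = q.coeff (q.natDegree - i))
    (hpu : ∃ k ≤ p.natDegree, (∀ i j, i ≤ j → j ≤ k → p.coeff i ≤ p.coeff j) ∧
      (∀ i j, k ≤ i → i ≤ j → p.coeff j ≤ p.coeff i))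
    (hqu : ∃ k ≤ q.natDegree, (∀ i j, i ≤ j → j ≤ k → q.coeff i ≤ q.coeff j) ∧
      (∀ i j, k ≤ i → i ≤ j → q.coeff j ≤ q.coeff i)) :
    (∀ i, 0 ≤ (p * q).coeff i) ∧
    (∀ i ≤ (p * q).natDegree, (p * q).coeff i = (p * q).coeff ((p * q).natDegree - i)) ∧
    (∃ k ≤ (p * q).natDegree,
      (∀ i j, i ≤ j → j ≤ k → (p * q).coeff i ≤ (p * q).coeff j) ∧
      (∀ i j, k ≤ i → i ≤ j → (p * q).coeff j ≤ (p * q).coeff i)) := by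
  obtain ⟨kp, hkp, hp1, hp2⟩ := hpu
  obtain ⟨kq, hkq, hq1, hq2⟩ := hqu
  by_cases hp : p = 0
  · subst hp
    simp only [zero_mul, Polynomial.coeff_zero, Polynomial.natDegree_zero]
    exact ⟨fun _ => le_refl 0, fun _ _ => trivial,
      0, le_refl 0, fun _ _ _ _ => le_refl 0, fun _ _ _ _ => le_refl 0⟩
  by_cases hq : q = 0
  · subst hq
    simp only [mul_zero, Polynomial.coeff_zero, Polynomial.natDegree_zero]
    exact ⟨fun _ => le_refl 0, fun _ _ => trivial,
      0, le_refl 0, fun _ _ _ _ => le_refl 0, fun _ _ _ _ => le_refl 0⟩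
  have hN : (p*q).natDegree = p.natDegree + q.natDegree := Polynomial.natDegree_mul hp hq
  have hcoeff : ∀ n, (p*q).coeff n = ∑ k ∈ range (n+1), p.coeff k * q.coeff (n-k) := by
    intro n
    rw [Polynomial.coeff_mul]
    exact Finset.Nat.sum_antidiagonal_eq_sum_range_succ_mk _ n
  have haz : ∀ n, p.natDegree < n → p.coeff n = 0 :=
    fun n h => p.coeff_eq_zero_of_natDegree_lt h
  have hbz : ∀ n, q.natDegree < n → q.coeff n = 0 :=
    fun n h => q.coeff_eq_zero_of_natDegree_lt h
  have hamono := nat_mono_of_sym_uni hps hkp hp1 hp2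
  have hbmono := nat_mono_of_sym_uni hqs hkq hq1 hq2
  have h0 : ∀ n, 0 ≤ (p*q).coeff n := by
    intro n
    rw [hcoeff]
    exact Finset.sum_nonneg fun k _ => mul_nonneg (hp0 k) (hq0 (n-k))
  have hsym : ∀ i ≤ (p*q).natDegree, (p*q).coeff i = (p*q).coeff ((p*q).natDegree - i) := by
    intro i hi
    rw [hN] at hi ⊢
    rw [hcoeff, hcoeff]
    exact csym haz hbz hps hqs i hi
  have hstep : ∀ m, 2*(m+1) ≤ (p*q).natDegree → (p*q).coeff m ≤ (p*q).coeff (m+1) := by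
    intro m hm
    rw [hN] at hm
    rw [hcoeff, hcoeff]
    exact cstep hp0 hq0 haz hbz hqs hamono hbmono m hm
  have h1 := inc_of_step hstep
  have hz : ∀ n, (p*q).natDegree < n → (p*q).coeff n = 0 :=
    fun n h => Polynomial.coeff_eq_zero_of_natDegree_lt h
  exact ⟨h0, hsym, (p*q).natDegree / 2, Nat.div_le_self _ _, h1,
    anti_of_inc_sym h0 hz hsym h1⟩
end

section
/- If P and Q are reflexive polytopes in R^n with 0 in the interior of P such that P ⊕ Q = conv(P ∪ Q) is a free sum, then the h*-polynomial of P ⊕ Q equals the product of the h*-polynomials of P and Q: h*_{P⊕Q}(t) = h*_P(t) · h*_Q(t). -/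
/-- `x` is an integer (lattice) point. -/
def isInt {n : ℕ} (x : Fin n → ℝ) : Prop := ∀ j, ∃ z : ℤ, x j = (z : ℝ)

/-- `P` is a lattice polytope: the convex hull of finitely many lattice points. -/
def isLatticePolytope {n : ℕ} (P : Set (Fin n → ℝ)) : Prop :=
  ∃ V : Finset (Fin n → ℝ), (∀ v ∈ V, isInt v) ∧ P = convexHull ℝ (V : Set (Fin n → ℝ))

/-- The polar dual `P^Δ = {y : x·y ≤ 1 for all x ∈ P}`. -/
def polarDual {n : ℕ} (P : Set (Fin n → ℝ)) : Set (Fin n → ℝ) :=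
  {y : Fin n → ℝ | ∀ x ∈ P, ∑ j, x j * y j ≤ 1}

/-- A reflexive polytope (with the origin in its interior). -/
def isReflexive0 {n : ℕ} (P : Set (Fin n → ℝ)) : Prop :=
  isLatticePolytope P ∧ (0 : Fin n → ℝ) ∈ interior P ∧ isLatticePolytope (polarDual P)

/-- A reflexive polytope in the wider sense: a lattice translate of a reflexive
polytope containing the origin in its interior. -/
def isReflexive {n : ℕ} (P : Set (Fin n → ℝ)) : Prop :=
  ∃ t : Fin n → ℝ, isInt t ∧ isReflexive0 ((fun x => x - t) '' P)


open Pointwise in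
/-- The Ehrhart series of `P`: the power series whose `m`-th coefficient is the number
of lattice points of the `m`-th dilate `mP`. -/
noncomputable def ehr {n : ℕ} (P : Set (Fin n → ℝ)) : PowerSeries ℚ :=
  PowerSeries.mk fun m => (Set.ncard {x : Fin n → ℝ | x ∈ (m : ℝ) • P ∧ isInt x} : ℚ)



open Pointwise

open Pointwise

lemma isInt_zero {n : ℕ} : isInt (0 : Fin n → ℝ) := fun _ => ⟨0, by simp⟩

lemma isInt_dot {n : ℕ} {x u : Fin n → ℝ} (hx : isInt x) (hu : isInt u) :
    ∃ z : ℤ, ∑ j, x j * u j = (z : ℝ) := by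
  choose a ha using hx; choose b hb using hu
  refine ⟨∑ j, a j * b j, ?_⟩
  push_cast
  exact Finset.sum_congr rfl fun j _ => by rw [ha, hb]

/-- lattice points in a bounded set are finite -/
lemma finite_lattice {n : ℕ} {S : Set (Fin n → ℝ)} (hS : Bornology.IsBounded S) :
    {x | x ∈ S ∧ isInt x}.Finite := by
  obtain ⟨C, hC⟩ := hS.exists_norm_le
  classical
  set φ : (Fin n → ℝ) → (Fin n → ℤ) := fun x j => round (x j) with hφ
  have hinj : Set.InjOn φ {x | x ∈ S ∧ isInt x} := by
    intro x hx y hy hxy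
    funext j
    obtain ⟨a, ha⟩ := hx.2 j; obtain ⟨b, hb⟩ := hy.2 j
    have := congrFun hxy j
    simp only [hφ, ha, hb, round_intCast] at this
    rw [ha, hb, this]
  have himg : φ '' {x | x ∈ S ∧ isInt x} ⊆ Set.pi Set.univ
      (fun _ : Fin n => Set.Icc (-(⌈C⌉ + 1)) (⌈C⌉ + 1)) := by
    rintro _ ⟨x, hx, rfl⟩ j _
    have h1 : |x j| ≤ C := by
      calc |x j| = ‖x j‖ := rfl
        _ ≤ ‖x‖ := norm_le_pi_norm x j
        _ ≤ C := hC x hx.1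
    obtain ⟨a, ha⟩ := hx.2 j
    have : φ x j = a := by simp [hφ, ha]
    rw [this]
    rw [ha] at h1
    have h2 : |(a : ℝ)| ≤ C := h1
    rw [abs_le] at h2
    constructor
    · have : (-(⌈C⌉ + 1) : ℝ) ≤ (a : ℝ) := by
        push_cast
        nlinarith [Int.le_ceil C]
      exact_mod_cast this
    · have : (a : ℝ) ≤ ((⌈C⌉ + 1 : ℤ) : ℝ) := by
        push_cast
        nlinarith [Int.le_ceil C]
      exact_mod_cast this
  have hfin : (Set.pi Set.univ (fun _ : Fin n => Set.Icc (-(⌈C⌉ + 1)) (⌈C⌉ + 1))).Finite :=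
    Set.Finite.pi fun _ => Set.finite_Icc _ _
  exact Set.Finite.of_finite_image (hfin.subset himg) hinj

/-- monotone dilation -/
lemma smul_subset_smul_of_le {d : ℕ} {S : Set (Fin d → ℝ)} (hconv : Convex ℝ S)
    (h0 : (0 : Fin d → ℝ) ∈ S) {a b : ℝ} (ha : 0 ≤ a) (hab : a ≤ b) :
    a • S ⊆ b • S := by
  rcases eq_or_lt_of_le (ha.trans hab) with hb | hb
  · have : a = 0 := le_antisymm (hab.trans hb.symm.le) ha
    rw [this, ← hb]
  · rintro _ ⟨s, hs, rfl⟩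
    refine ⟨(a / b) • s, ?_, ?_⟩
    · exact hconv.smul_mem_of_zero_mem h0 hs
        ⟨div_nonneg ha hb.le, div_le_one_of_le₀ hab hb.le⟩
    · show b • (a / b) • s = a • s
      rw [smul_smul, mul_div_cancel₀ _ hb.ne']


lemma dot_linear {n : ℕ} (c : Fin n → ℝ) :
    IsLinearMap ℝ (fun y : Fin n → ℝ => ∑ j, c j * y j) := by
  constructor
  · intro y z; rw [← Finset.sum_add_distrib]; congr 1; funext j; simp [Pi.add_apply]; ring
  · intro a y
    simp only [Pi.smul_apply, smul_eq_mul, Finset.mul_sum]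
    exact Finset.sum_congr rfl fun j _ => by ring

/-- bipolar-type lemma -/
lemma mem_of_polarDual_le {n : ℕ} {P : Set (Fin n → ℝ)} (hconv : Convex ℝ P)
    (hcl : IsClosed P) (h0 : (0 : Fin n → ℝ) ∈ P) {x : Fin n → ℝ}
    (hx : ∀ y ∈ polarDual P, ∑ j, x j * y j ≤ 1) : x ∈ P := by
  classical
  by_contra hxP
  obtain ⟨f, u, hfP, hfx⟩ := geometric_hahn_banach_closed_point hconv hcl hxP
  have hu : 0 < u := by simpa using hfP 0 h0
  set y : Fin n → ℝ := fun j => f (Pi.single j 1) / u with hy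
  have key : ∀ w : Fin n → ℝ, ∑ j, w j * y j = f w / u := by
    intro w
    have hw : f w = ∑ j, w j * f (Pi.single j 1) := by
      conv_lhs => rw [pi_eq_sum_univ w]
      rw [map_sum]
      refine Finset.sum_congr rfl fun j _ => ?_
      rw [map_smul]
      simp only [smul_eq_mul]
      congr 1
      congr 1
      funext i
      simp [Pi.single, Function.update]
      split_ifs with h1 h2 h3 <;> first | rfl | (exfalso; first | exact h2 h1.symm | exact h1 h3.symm)
    rw [hw, Finset.sum_div]
    exact Finset.sum_congr rfl fun j _ => by rw [hy]; ring
  have hyP : y ∈ polarDual P := by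
    intro p hp
    rw [key p]
    exact le_of_lt ((div_lt_one hu).mpr (hfP p hp))
  have := hx y hyP
  rw [key x] at this
  rw [div_le_one hu] at this
  exact absurd hfx (not_lt.mpr this)


lemma isLatticePolytope.convex {n : ℕ} {P : Set (Fin n → ℝ)} (h : isLatticePolytope P) :
    Convex ℝ P := by
  obtain ⟨V, -, rfl⟩ := h; exact convex_convexHull ℝ _

lemma isLatticePolytope.isCompact {n : ℕ} {P : Set (Fin n → ℝ)} (h : isLatticePolytope P) :
    IsCompact P := by
  obtain ⟨V, -, rfl⟩ := h; exact V.finite_toSet.isCompact_convexHull ℝ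

/-- membership in a dilate, via the dual vertices -/
lemma mem_dilate_iff {n : ℕ} {P : Set (Fin n → ℝ)} (hconv : Convex ℝ P)
    (hcl : IsClosed P) (h0 : (0 : Fin n → ℝ) ∈ P) {U : Finset (Fin n → ℝ)}
    (hU : polarDual P = convexHull ℝ (U : Set (Fin n → ℝ)))
    {a : ℝ} (ha : 0 < a) (x : Fin n → ℝ) :
    x ∈ a • P ↔ ∀ u ∈ U, ∑ j, x j * u j ≤ a := by
  rw [Set.mem_smul_set_iff_inv_smul_mem₀ ha.ne' P x]
  constructor
  · intro hmem u hu
    have huP : u ∈ polarDual P := by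
      rw [hU]; exact subset_convexHull ℝ _ hu
    have := huP _ hmem
    have h2 : ∑ j, (a⁻¹ • x) j * u j = a⁻¹ * ∑ j, x j * u j := by
      rw [Finset.mul_sum]
      exact Finset.sum_congr rfl fun j _ => by simp [Pi.smul_apply, smul_eq_mul]; ring
    rw [h2] at this
    calc ∑ j, x j * u j = a * (a⁻¹ * ∑ j, x j * u j) := by field_simp
      _ ≤ a * 1 := by exact mul_le_mul_of_nonneg_left this ha.le
      _ = a := mul_one a
  · intro h
    refine mem_of_polarDual_le hconv hcl h0 ?_
    intro y hy
    rw [hU] at hy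
    have hconvset : Convex ℝ {y : Fin n → ℝ | ∑ j, (a⁻¹ • x) j * y j ≤ 1} :=
      convex_halfSpace_le (dot_linear _) 1
    refine convexHull_min ?_ hconvset hy
    intro u hu
    have h2 : ∑ j, (a⁻¹ • x) j * u j = a⁻¹ * ∑ j, x j * u j := by
      rw [Finset.mul_sum]
      exact Finset.sum_congr rfl fun j _ => by simp [Pi.smul_apply, smul_eq_mul]; ring
    show ∑ j, (a⁻¹ • x) j * u j ≤ 1
    rw [h2]
    calc a⁻¹ * ∑ j, x j * u j ≤ a⁻¹ * a :=
          mul_le_mul_of_nonneg_left (h u hu) (inv_nonneg.mpr ha.le)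
      _ = 1 := inv_mul_cancel₀ ha.ne'

/-- For a reflexive polytope `P` and a lattice point `x`, there is an integer level `L`
such that `x ∈ a • P` iff `L ≤ a`. -/
lemma exists_level {n : ℕ} {P : Set (Fin n → ℝ)} (hP : isReflexive0 P)
    {x : Fin n → ℝ} (hx : isInt x) :
    ∃ L : ℕ, ∀ a : ℝ, 0 ≤ a → (x ∈ a • P ↔ (L : ℝ) ≤ a) := by
  classical
  obtain ⟨hlat, h0int, hdual⟩ := hP
  have hconv := hlat.convex
  have hcomp := hlat.isCompact
  have hcl := hcomp.isClosed
  have h0 : (0 : Fin n → ℝ) ∈ P := interior_subset h0int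
  have hPne : P.Nonempty := ⟨0, h0⟩
  obtain ⟨U, hUint, hU⟩ := hdual
  -- the zero case
  by_cases hx0 : x = 0
  · refine ⟨0, fun a ha => ?_⟩
    subst hx0
    simp only [Nat.cast_zero, ha, iff_true]
    rcases eq_or_lt_of_le ha with h | h
    · rw [← h, Set.zero_smul_set hPne]; exact Set.zero_mem_zero
    · exact ⟨0, h0, smul_zero a⟩
  -- nonzero case
  have hUne : U.Nonempty := by
    have hne : (polarDual P).Nonempty := ⟨0, fun p _ => by simp⟩
    rw [hU, convexHull_nonempty_iff, Finset.coe_nonempty] at hne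
    exact hne
  set r : ℝ := U.sup' hUne (fun u => ∑ j, x j * u j) with hr
  -- r is an integer
  obtain ⟨u₀, hu₀U, hu₀⟩ := Finset.exists_mem_eq_sup' hUne (fun u => ∑ j, x j * u j)
  obtain ⟨z, hz⟩ := isInt_dot hx (hUint u₀ hu₀U)
  have hrz : r = (z : ℝ) := by rw [hr, hu₀, hz]
  -- r ≥ 1
  obtain ⟨C, hC⟩ := hcomp.isBounded.exists_norm_le
  have hC0 : 0 ≤ C := le_trans (norm_nonneg _) (hC 0 h0)
  set M : ℝ := C * ∑ j, |x j| with hM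
  have hM0 : 0 ≤ M := by positivity
  have hdotbound : ∀ p ∈ P, ∑ j, p j * x j ≤ M := by
    intro p hp
    calc ∑ j, p j * x j ≤ ∑ j, |p j * x j| := Finset.sum_le_sum fun j _ => le_abs_self _
      _ = ∑ j, |p j| * |x j| := by simp [abs_mul]
      _ ≤ ∑ j, C * |x j| := by
          refine Finset.sum_le_sum fun j _ => ?_
          exact mul_le_mul_of_nonneg_right
            (le_trans (norm_le_pi_norm p j) (hC p hp)) (abs_nonneg _)
      _ = M := by rw [hM, Finset.mul_sum]
  set ε : ℝ := (M + 1)⁻¹ with hε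
  have hε0 : 0 < ε := by positivity
  have hyP : (ε • x) ∈ polarDual P := by
    intro p hp
    have : ∑ j, p j * (ε • x) j = ε * ∑ j, p j * x j := by
      rw [Finset.mul_sum]
      exact Finset.sum_congr rfl fun j _ => by simp [Pi.smul_apply, smul_eq_mul]; ring
    rw [this, hε]
    rw [inv_mul_le_iff₀ (by positivity), mul_one]
    calc ∑ j, p j * x j ≤ M := hdotbound p hp
      _ ≤ M + 1 := by linarith
  have hxx : 0 < ∑ j, x j * x j := by
    have h1 : ∀ j ∈ Finset.univ, 0 ≤ x j * x j := fun j _ => mul_self_nonneg _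
    have h2 : ∃ j ∈ Finset.univ, 0 < x j * x j := by
      have : ∃ j, x j ≠ 0 := by
        by_contra hcon
        push_neg at hcon
        exact hx0 (funext hcon)
      obtain ⟨j, hj⟩ := this
      exact ⟨j, Finset.mem_univ j, mul_self_pos.mpr hj⟩
    exact Finset.sum_pos' h1 h2
  have hxr : ∑ j, x j * (ε • x) j ≤ r := by
    have hmem : (ε • x) ∈ convexHull ℝ (U : Set (Fin n → ℝ)) := by rw [← hU]; exact hyP
    have hcs : Convex ℝ {y : Fin n → ℝ | ∑ j, x j * y j ≤ r} :=
      convex_halfSpace_le (dot_linear _) r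
    have hsub : (U : Set (Fin n → ℝ)) ⊆ {y | ∑ j, x j * y j ≤ r} := by
      intro u hu
      show ∑ j, x j * u j ≤ r
      rw [hr]
      exact Finset.le_sup' (fun w => ∑ j, x j * w j) (Finset.mem_coe.mp hu)
    exact convexHull_min hsub hcs hmem
  have hεxx : ∑ j, x j * (ε • x) j = ε * ∑ j, x j * x j := by
    rw [Finset.mul_sum]
    exact Finset.sum_congr rfl fun j _ => by simp [Pi.smul_apply, smul_eq_mul]; ring
  have hr0 : 0 < r := lt_of_lt_of_le (by rw [hεxx] at hxr ⊢; positivity) hxr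
  have hz1 : 1 ≤ z := by
    rw [hrz] at hr0
    exact_mod_cast hr0
  have hzL : ((z.toNat : ℕ) : ℝ) = r := by
    rw [hrz]
    norm_cast
    exact Int.toNat_of_nonneg (by linarith)
  refine ⟨z.toNat, fun a ha => ?_⟩
  rcases eq_or_lt_of_le ha with h | h
  · rw [← h]
    constructor
    · intro hmem
      rw [Set.zero_smul_set hPne] at hmem
      exact absurd hmem hx0
    · intro hle
      exfalso
      rw [hzL, hrz] at hle
      have : (1 : ℝ) ≤ (z : ℝ) := by exact_mod_cast hz1
      linarith
  · rw [mem_dilate_iff hconv hcl h0 hU h x, hzL, hr]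
    exact (Finset.sup'_le_iff hUne _).symm

section FreeSum

variable {n m : ℕ}

def pleft (z : Fin (n + m) → ℝ) : Fin n → ℝ := fun i => z (Fin.castAdd m i)
def pright (z : Fin (n + m) → ℝ) : Fin m → ℝ := fun i => z (Fin.natAdd n i)

lemma append_pleft_pright (z : Fin (n + m) → ℝ) :
    Fin.append (pleft z) (pright z) = z := by
  funext i
  refine Fin.addCases (fun i₀ => ?_) (fun i₀ => ?_) i
  · rw [Fin.append_left]; rfl
  · rw [Fin.append_right]; rfl

lemma pleft_append (x : Fin n → ℝ) (y : Fin m → ℝ) : pleft (Fin.append x y) = x := by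
  funext i; exact Fin.append_left x y i

lemma pright_append (x : Fin n → ℝ) (y : Fin m → ℝ) : pright (Fin.append x y) = y := by
  funext i; exact Fin.append_right x y i

lemma append_add (x x' : Fin n → ℝ) (y y' : Fin m → ℝ) :
    Fin.append x y + Fin.append x' y' = Fin.append (x + x') (y + y') := by
  funext i
  refine Fin.addCases (fun i₀ => ?_) (fun i₀ => ?_) i <;>
    simp [Fin.append_left, Fin.append_right]

lemma append_smul (a : ℝ) (x : Fin n → ℝ) (y : Fin m → ℝ) :
    a • Fin.append x y = Fin.append (a • x) (a • y) := by
  funext i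
  refine Fin.addCases (fun i₀ => ?_) (fun i₀ => ?_) i <;>
    simp [Fin.append_left, Fin.append_right]

lemma isInt_append_iff {x : Fin n → ℝ} {y : Fin m → ℝ} :
    isInt (Fin.append x y) ↔ isInt x ∧ isInt y := by
  constructor
  · intro h
    constructor
    · intro i
      have := h (Fin.castAdd m i)
      rwa [Fin.append_left] at this
    · intro i
      have := h (Fin.natAdd n i)
      rwa [Fin.append_right] at this
  · rintro ⟨h1, h2⟩ i
    refine Fin.addCases (fun i₀ => ?_) (fun i₀ => ?_) i
    · rw [Fin.append_left]; exact h1 i₀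
    · rw [Fin.append_right]; exact h2 i₀

lemma append_zero_zero : Fin.append (0 : Fin n → ℝ) (0 : Fin m → ℝ) = 0 := by
  funext i
  refine Fin.addCases (fun i₀ => ?_) (fun i₀ => ?_) i <;>
    simp [Fin.append_left, Fin.append_right]

/-- membership in the free sum -/
lemma mem_freeSum_iff {P : Set (Fin n → ℝ)} {Q : Set (Fin m → ℝ)}
    (hPc : Convex ℝ P) (hQc : Convex ℝ Q) (hPne : P.Nonempty) (hQne : Q.Nonempty)
    (z : Fin (n + m) → ℝ) :
    z ∈ convexHull ℝ
        ((fun p : Fin n → ℝ => Fin.append p (0 : Fin m → ℝ)) '' P ∪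
         (fun q : Fin m → ℝ => Fin.append (0 : Fin n → ℝ) q) '' Q) ↔
    ∃ a b : ℝ, 0 ≤ a ∧ 0 ≤ b ∧ a + b = 1 ∧ pleft z ∈ a • P ∧ pright z ∈ b • Q := by
  classical
  set F : (Fin n → ℝ) → (Fin (n + m) → ℝ) := fun p => Fin.append p 0 with hF
  set G : (Fin m → ℝ) → (Fin (n + m) → ℝ) := fun q => Fin.append 0 q with hG
  have hFlin : IsLinearMap ℝ F := by
    constructor
    · intro p p'; show Fin.append (p + p') (0 : Fin m → ℝ) = Fin.append p (0 : Fin m → ℝ) + Fin.append p' (0 : Fin m → ℝ)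
      rw [append_add, add_zero]
    · intro a p; show Fin.append (a • p) (0 : Fin m → ℝ) = a • Fin.append p (0 : Fin m → ℝ)
      rw [append_smul, smul_zero]
  have hGlin : IsLinearMap ℝ G := by
    constructor
    · intro p p'; show Fin.append (0 : Fin n → ℝ) (p + p') = Fin.append (0 : Fin n → ℝ) p + Fin.append (0 : Fin n → ℝ) p'
      rw [append_add, add_zero]
    · intro a p; show Fin.append (0 : Fin n → ℝ) (a • p) = a • Fin.append (0 : Fin n → ℝ) p
      rw [append_smul, smul_zero]
  have hFP : Convex ℝ (F '' P) := hPc.is_linear_image hFlin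
  have hGQ : Convex ℝ (G '' Q) := hQc.is_linear_image hGlin
  rw [convexHull_union (hPne.image F) (hQne.image G), hFP.convexHull_eq, hGQ.convexHull_eq,
    mem_convexJoin]
  constructor
  · rintro ⟨_, ⟨p, hp, rfl⟩, _, ⟨q, hq, rfl⟩, a, b, ha, hb, hab, rfl⟩
    refine ⟨a, b, ha, hb, hab, ?_, ?_⟩
    · have : a • F p + b • G q = Fin.append (a • p) (b • q) := by
        rw [hF, hG]; simp only []
        rw [append_smul, append_smul, append_add]
        congr 1 <;> simp
      rw [this, pleft_append]
      exact ⟨p, hp, rfl⟩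
    · have : a • F p + b • G q = Fin.append (a • p) (b • q) := by
        rw [hF, hG]; simp only []
        rw [append_smul, append_smul, append_add]
        congr 1 <;> simp
      rw [this, pright_append]
      exact ⟨q, hq, rfl⟩
  · rintro ⟨a, b, ha, hb, hab, ⟨p, hp, hpz⟩, ⟨q, hq, hqz⟩⟩
    refine ⟨F p, ⟨p, hp, rfl⟩, G q, ⟨q, hq, rfl⟩, a, b, ha, hb, hab, ?_⟩
    have : a • F p + b • G q = Fin.append (a • p) (b • q) := by
      show a • Fin.append p (0 : Fin m → ℝ) + b • Fin.append (0 : Fin n → ℝ) q = _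
      rw [append_smul, append_smul, append_add, smul_zero, smul_zero, add_zero, zero_add]
    rw [this, show a • p = pleft z from hpz, show b • q = pright z from hqz,
      append_pleft_pright]

end FreeSum

section Decomp

variable {n m : ℕ} {P : Set (Fin n → ℝ)} {Q : Set (Fin m → ℝ)}

lemma pleft_smul (a : ℝ) (z : Fin (n + m) → ℝ) : pleft (a • z) = a • pleft z := rfl
lemma pright_smul (a : ℝ) (z : Fin (n + m) → ℝ) : pright (a • z) = a • pright z := rfl

lemma smul_mem_smul_of_mem {c a : ℝ} {S : Set (Fin n → ℝ)} {x : Fin n → ℝ}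
    (h : x ∈ c • S) : a • x ∈ (a * c) • S := by
  obtain ⟨s, hs, rfl⟩ := h
  exact ⟨s, hs, by rw [smul_smul]⟩

lemma mem_dilate_freeSum_iff (hP : isReflexive0 P) (hQc : Convex ℝ Q)
    (h0Q : (0 : Fin m → ℝ) ∈ Q) (k : ℕ) {z : Fin (n + m) → ℝ} (hz : isInt z) :
    z ∈ (k : ℝ) • convexHull ℝ
        ((fun p : Fin n → ℝ => Fin.append p (0 : Fin m → ℝ)) '' P ∪
         (fun q : Fin m → ℝ => Fin.append (0 : Fin n → ℝ) q) '' Q) ↔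
    ∃ j : ℕ, j ≤ k ∧ pleft z ∈ ((k - j : ℕ) : ℝ) • P ∧ pright z ∈ ((j : ℕ) : ℝ) • Q := by
  set C := convexHull ℝ
      ((fun p : Fin n → ℝ => Fin.append p (0 : Fin m → ℝ)) '' P ∪
       (fun q : Fin m → ℝ => Fin.append (0 : Fin n → ℝ) q) '' Q) with hC
  have hPc := hP.1.convex
  have h0P : (0 : Fin n → ℝ) ∈ P := interior_subset hP.2.1
  have hPne : P.Nonempty := ⟨0, h0P⟩
  have hQne : Q.Nonempty := ⟨0, h0Q⟩
  have hCne : C.Nonempty :=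
    ⟨Fin.append 0 0, subset_convexHull ℝ _ (Set.mem_union_left _ ⟨0, h0P, rfl⟩)⟩
  have hzl : isInt (pleft z) := fun i => hz (Fin.castAdd m i)
  have hzr : isInt (pright z) := fun i => hz (Fin.natAdd n i)
  obtain ⟨L, hL⟩ := exists_level hP hzl
  rcases Nat.eq_zero_or_pos k with rfl | hk
  · -- k = 0
    rw [Nat.cast_zero, Set.zero_smul_set hCne]
    constructor
    · intro hmem
      have hz0 : z = 0 := hmem
      refine ⟨0, le_refl 0, ?_, ?_⟩
      · rw [Nat.sub_zero, Nat.cast_zero, Set.zero_smul_set hPne]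
        show pleft z = 0
        rw [hz0]; rfl
      · rw [Nat.cast_zero, Set.zero_smul_set hQne]
        show pright z = 0
        rw [hz0]; rfl
    · rintro ⟨j, hj, h1, h2⟩
      interval_cases j
      rw [Nat.sub_zero, Nat.cast_zero, Set.zero_smul_set hPne] at h1
      rw [Nat.cast_zero, Set.zero_smul_set hQne] at h2
      have : z = Fin.append (pleft z) (pright z) := (append_pleft_pright z).symm
      rw [this, show pleft z = 0 from h1, show pright z = 0 from h2, append_zero_zero]
      rfl
  · -- k ≥ 1
    have hk0 : (0 : ℝ) < (k : ℝ) := by exact_mod_cast hk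
    rw [Set.mem_smul_set_iff_inv_smul_mem₀ hk0.ne' C z, hC,
      mem_freeSum_iff hPc hQc hPne hQne]
    constructor
    · rintro ⟨a, b, ha, hb, hab, h1, h2⟩
      rw [pleft_smul] at h1
      rw [pright_smul] at h2
      have h1' : pleft z ∈ ((k : ℝ) * a) • P := by
        have h3 := smul_mem_smul_of_mem (a := (k : ℝ)) h1
        rwa [smul_smul, mul_inv_cancel₀ hk0.ne', one_smul] at h3
      have h2' : pright z ∈ ((k : ℝ) * b) • Q := by
        have h3 := smul_mem_smul_of_mem (a := (k : ℝ)) h2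
        rwa [smul_smul, mul_inv_cancel₀ hk0.ne', one_smul] at h3
      have hLka : (L : ℝ) ≤ (k : ℝ) * a := (hL _ (by positivity)).mp h1'
      have hLk : L ≤ k := by
        have : (L : ℝ) ≤ (k : ℝ) := le_trans hLka (by nlinarith)
        exact_mod_cast this
      refine ⟨k - L, Nat.sub_le k L, ?_, ?_⟩
      · rw [Nat.sub_sub_self hLk]
        exact (hL _ (Nat.cast_nonneg L)).mpr le_rfl
      · have hkbj : (k : ℝ) * b ≤ ((k - L : ℕ) : ℝ) := by
          rw [Nat.cast_sub hLk]
          nlinarith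
        exact smul_subset_smul_of_le hQc h0Q (by positivity) hkbj h2'
    · rintro ⟨j, hj, h1, h2⟩
      have hcast : ((k - j : ℕ) : ℝ) = (k : ℝ) - (j : ℝ) := Nat.cast_sub hj
      refine ⟨((k - j : ℕ) : ℝ) / k, (j : ℝ) / k, by positivity, by positivity, ?_, ?_, ?_⟩
      · rw [hcast]; field_simp; ring
      · rw [pleft_smul]
        have h3 := smul_mem_smul_of_mem (a := (k : ℝ)⁻¹) h1
        rwa [show (k : ℝ)⁻¹ * ((k - j : ℕ) : ℝ) = ((k - j : ℕ) : ℝ) / k from by ring] at h3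
      · rw [pright_smul]
        have h3 := smul_mem_smul_of_mem (a := (k : ℝ)⁻¹) h2
        rwa [show (k : ℝ)⁻¹ * ((j : ℕ) : ℝ) = ((j : ℕ) : ℝ) / k from by ring] at h3

end Decomp

lemma ncard_sprod {α β : Type*} (s : Set α) (t : Set β) :
    (s ×ˢ t).ncard = s.ncard * t.ncard := by
  rw [← Nat.card_coe_set_eq, ← Nat.card_coe_set_eq, ← Nat.card_coe_set_eq,
    Nat.card_congr (Equiv.Set.prod s t), Nat.card_prod]

lemma ncard_biUnion_range {α : Type*} (f : ℕ → Set α) (K : ℕ)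
    (hfin : ∀ j, (f j).Finite)
    (hdisj : ∀ i j, i < j → Disjoint (f i) (f j)) :
    (⋃ j ∈ Finset.range K, f j).ncard = ∑ j ∈ Finset.range K, (f j).ncard := by
  induction K with
  | zero => simp
  | succ K ih =>
    have hU : (⋃ j ∈ Finset.range (K + 1), f j) = (⋃ j ∈ Finset.range K, f j) ∪ f K := by
      ext x
      simp only [Set.mem_iUnion, Finset.mem_range, Set.mem_union, Nat.lt_succ_iff_lt_or_eq]
      constructor
      · rintro ⟨j, hj | rfl, hx⟩
        · exact Or.inl ⟨j, hj, hx⟩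
        · exact Or.inr hx
      · rintro (⟨j, hj, hx⟩ | hx)
        · exact ⟨j, Or.inl hj, hx⟩
        · exact ⟨K, Or.inr rfl, hx⟩
    have hdisj2 : Disjoint (⋃ j ∈ Finset.range K, f j) (f K) := by
      rw [Set.disjoint_left]
      rintro x hx hxK
      simp only [Set.mem_iUnion, Finset.mem_range] at hx
      obtain ⟨j, hj, hx⟩ := hx
      exact Set.disjoint_left.mp (hdisj j K hj) hx hxK
    have hfinU : (⋃ j ∈ Finset.range K, f j).Finite :=
      Set.Finite.biUnion (Finset.range K).finite_toSet fun j _ => hfin j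
    rw [hU, Set.ncard_union_eq hdisj2 hfinU (hfin K), Finset.sum_range_succ, ih]

section Count

variable {n m : ℕ} {P : Set (Fin n → ℝ)} {Q : Set (Fin m → ℝ)}

/-- lattice points whose minimal `Q`-dilate is exactly `j` -/
def Dset (Q : Set (Fin m → ℝ)) (j : ℕ) : Set (Fin m → ℝ) :=
  {y | y ∈ (j : ℝ) • Q ∧ isInt y ∧ ∀ j' : ℕ, j' < j → y ∉ (j' : ℝ) • Q}

lemma Dset_subset (Q : Set (Fin m → ℝ)) (j : ℕ) :
    Dset Q j ⊆ {y | y ∈ (j : ℝ) • Q ∧ isInt y} := fun y hy => ⟨hy.1, hy.2.1⟩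

lemma lattice_dilate_finite {d : ℕ} {S : Set (Fin d → ℝ)} (hb : Bornology.IsBounded S)
    (c : ℝ) : {x : Fin d → ℝ | x ∈ c • S ∧ isInt x}.Finite :=
  finite_lattice (hb.smul₀ c)

lemma count_freeSum (hP : isReflexive0 P) (hQc : Convex ℝ Q)
    (h0Q : (0 : Fin m → ℝ) ∈ Q) (hPb : Bornology.IsBounded P)
    (hQb : Bornology.IsBounded Q) (k : ℕ) :
    {z : Fin (n + m) → ℝ | z ∈ (k : ℝ) • convexHull ℝ
        ((fun p : Fin n → ℝ => Fin.append p (0 : Fin m → ℝ)) '' P ∪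
         (fun q : Fin m → ℝ => Fin.append (0 : Fin n → ℝ) q) '' Q) ∧ isInt z}.ncard
      = ∑ j ∈ Finset.range (k + 1),
          {x : Fin n → ℝ | x ∈ ((k - j : ℕ) : ℝ) • P ∧ isInt x}.ncard * (Dset Q j).ncard := by
  classical
  have hPc := hP.1.convex
  have h0P : (0 : Fin n → ℝ) ∈ P := interior_subset hP.2.1
  set app : (Fin n → ℝ) × (Fin m → ℝ) → (Fin (n + m) → ℝ) :=
    fun xy => Fin.append xy.1 xy.2 with happ
  have hinj : Function.Injective app := by
    rintro ⟨x, y⟩ ⟨x', y'⟩ h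
    have h1 : x = x' := by
      rw [← pleft_append x y, ← pleft_append x' y']
      exact congrArg pleft h
    have h2 : y = y' := by
      rw [← pright_append x y, ← pright_append x' y']
      exact congrArg pright h
    rw [Prod.mk.injEq]; exact ⟨h1, h2⟩
  set E : ℕ → Set (Fin (n + m) → ℝ) := fun j =>
    app '' (({x : Fin n → ℝ | x ∈ ((k - j : ℕ) : ℝ) • P ∧ isInt x}) ×ˢ Dset Q j) with hE
  have hTE : {z : Fin (n + m) → ℝ | z ∈ (k : ℝ) • convexHull ℝ
        ((fun p : Fin n → ℝ => Fin.append p (0 : Fin m → ℝ)) '' P ∪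
         (fun q : Fin m → ℝ => Fin.append (0 : Fin n → ℝ) q) '' Q) ∧ isInt z}
      = ⋃ j ∈ Finset.range (k + 1), E j := by
    ext z
    simp only [Set.mem_setOf_eq, Set.mem_iUnion, Finset.mem_range, Nat.lt_succ_iff]
    constructor
    · rintro ⟨hmem, hint⟩
      rw [mem_dilate_freeSum_iff hP hQc h0Q k hint] at hmem
      obtain ⟨j, hj, h1, h2⟩ := hmem
      have hex : ∃ j', pright z ∈ ((j' : ℕ) : ℝ) • Q := ⟨j, h2⟩
      set j₀ := Nat.find hex with hj₀
      have hj₀le : j₀ ≤ j := Nat.find_le h2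
      refine ⟨j₀, le_trans hj₀le hj, (pleft z, pright z), ⟨⟨?_, fun i => hint _⟩, ?_⟩, ?_⟩
      · refine smul_subset_smul_of_le hPc h0P (Nat.cast_nonneg _)
          (Nat.cast_le.mpr (Nat.sub_le_sub_left hj₀le k)) h1
      · exact ⟨Nat.find_spec hex, fun i => hint _, fun j' hj' => Nat.find_min hex hj'⟩
      · exact append_pleft_pright z
    · rintro ⟨j, hj, ⟨x, y⟩, ⟨⟨hx, hxint⟩, hy⟩, rfl⟩
      have hzi : isInt (app (x, y)) := isInt_append_iff.mpr ⟨hxint, hy.2.1⟩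
      refine ⟨?_, hzi⟩
      rw [mem_dilate_freeSum_iff hP hQc h0Q k hzi]
      refine ⟨j, hj, ?_, ?_⟩
      · rw [show pleft (app (x, y)) = x from pleft_append x y]; exact hx
      · rw [show pright (app (x, y)) = y from pright_append x y]; exact hy.1
  rw [hTE, ncard_biUnion_range]
  · refine Finset.sum_congr rfl fun j _ => ?_
    rw [hE]
    rw [Set.ncard_image_of_injective _ hinj, ncard_sprod]
  · intro j
    refine Set.Finite.image _ (Set.Finite.prod ?_ ?_)
    · exact lattice_dilate_finite hPb _
    · exact (lattice_dilate_finite hQb ((j : ℕ) : ℝ)).subset (Dset_subset Q j)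
  · intro i j hij
    rw [Set.disjoint_left]
    rintro z ⟨⟨x, y⟩, ⟨-, hy⟩, rfl⟩ ⟨⟨x', y'⟩, ⟨-, hy'⟩, happeq⟩
    have : y' = y := by
      rw [← pright_append x' y', ← pright_append x y]
      exact congrArg pright happeq
    rw [this] at hy'
    exact hy'.2.2 i hij hy.1

end Count

section DsetCard

variable {m : ℕ} {Q : Set (Fin m → ℝ)}

lemma Dset_zero (Q : Set (Fin m → ℝ)) :
    Dset Q 0 = {y | y ∈ ((0 : ℕ) : ℝ) • Q ∧ isInt y} := by
  ext y
  simp only [Dset, Set.mem_setOf_eq, Nat.cast_zero, Nat.not_lt_zero, false_implies,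
    implies_true, and_true]

lemma Dset_succ (hQc : Convex ℝ Q) (h0Q : (0 : Fin m → ℝ) ∈ Q) (j : ℕ) :
    Dset Q (j + 1) = {y | y ∈ ((j + 1 : ℕ) : ℝ) • Q ∧ isInt y} \
      {y | y ∈ ((j : ℕ) : ℝ) • Q ∧ isInt y} := by
  ext y
  simp only [Dset, Set.mem_setOf_eq, Set.mem_diff]
  constructor
  · rintro ⟨h1, h2, h3⟩
    exact ⟨⟨by exact_mod_cast h1, h2⟩, fun hc => h3 j (Nat.lt_succ_self j) hc.1⟩
  · rintro ⟨⟨h1, h2⟩, h3⟩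
    refine ⟨by exact_mod_cast h1, h2, fun j' hj' hc => h3 ⟨?_, h2⟩⟩
    have hle : ((j' : ℕ) : ℝ) ≤ ((j : ℕ) : ℝ) := by exact_mod_cast Nat.lt_succ_iff.mp hj'
    exact smul_subset_smul_of_le hQc h0Q (Nat.cast_nonneg _) hle hc

lemma dilate_lattice_subset (hQc : Convex ℝ Q) (h0Q : (0 : Fin m → ℝ) ∈ Q) (j : ℕ) :
    {y : Fin m → ℝ | y ∈ ((j : ℕ) : ℝ) • Q ∧ isInt y} ⊆
    {y | y ∈ ((j + 1 : ℕ) : ℝ) • Q ∧ isInt y} := by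
  rintro y ⟨h1, h2⟩
  refine ⟨?_, h2⟩
  have hle : ((j : ℕ) : ℝ) ≤ ((j + 1 : ℕ) : ℝ) := by exact_mod_cast Nat.le_succ j
  exact smul_subset_smul_of_le hQc h0Q (Nat.cast_nonneg _) hle h1

lemma Dset_card_zero (Q : Set (Fin m → ℝ)) :
    (Dset Q 0).ncard = {y : Fin m → ℝ | y ∈ ((0 : ℕ) : ℝ) • Q ∧ isInt y}.ncard := by
  rw [Dset_zero]

lemma Dset_card_succ (hQc : Convex ℝ Q) (h0Q : (0 : Fin m → ℝ) ∈ Q)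
    (hQb : Bornology.IsBounded Q) (j : ℕ) :
    (Dset Q (j + 1)).ncard + {y : Fin m → ℝ | y ∈ ((j : ℕ) : ℝ) • Q ∧ isInt y}.ncard
      = {y : Fin m → ℝ | y ∈ ((j + 1 : ℕ) : ℝ) • Q ∧ isInt y}.ncard := by
  rw [Dset_succ hQc h0Q]
  exact Set.ncard_diff_add_ncard_of_subset (dilate_lattice_subset hQc h0Q j)
    (lattice_dilate_finite hQb _)

end DsetCard

lemma telescope_sum (a b d : ℕ → ℚ) (h0 : d 0 = a 0)
    (hs : ∀ j, d (j + 1) + a j = a (j + 1)) (k : ℕ) :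
    ∑ j ∈ Finset.range (k + 1), b (k - j) * d j
      + ∑ j ∈ Finset.range k, a j * b (k - 1 - j)
      = ∑ j ∈ Finset.range (k + 1), a j * b (k - j) := by
  rw [Finset.sum_range_succ' (fun j => b (k - j) * d j) k,
    Finset.sum_range_succ' (fun j => a j * b (k - j)) k]
  simp only [Nat.sub_zero]
  rw [add_right_comm, ← Finset.sum_add_distrib, h0]
  have : ∀ j ∈ Finset.range k,
      b (k - (j + 1)) * d (j + 1) + a j * b (k - 1 - j) = a (j + 1) * b (k - (j + 1)) := by
    intro j _
    rw [show k - (j + 1) = k - 1 - j from by omega, ← hs j]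
    ring
  rw [Finset.sum_congr rfl this]
  ring


lemma ehr_coeff {n : ℕ} (P : Set (Fin n → ℝ)) (k : ℕ) :
    PowerSeries.coeff k (ehr P)
      = ({x : Fin n → ℝ | x ∈ ((k : ℕ) : ℝ) • P ∧ isInt x}.ncard : ℚ) :=
  PowerSeries.coeff_mk k _

/-- Braun's theorem, series form. -/
lemma ehr_freeSum {n m : ℕ} {P : Set (Fin n → ℝ)} {Q : Set (Fin m → ℝ)}
    (hP : isReflexive0 P) (hQc : Convex ℝ Q) (h0Q : (0 : Fin m → ℝ) ∈ Q)
    (hQb : Bornology.IsBounded Q) :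
    ehr (convexHull ℝ
        ((fun p : Fin n → ℝ => Fin.append p (0 : Fin m → ℝ)) '' P ∪
         (fun q : Fin m → ℝ => Fin.append (0 : Fin n → ℝ) q) '' Q))
      = ehr P * ehr Q * (1 - PowerSeries.X) := by
  have hPb : Bornology.IsBounded P := hP.1.isCompact.isBounded
  set aQ : ℕ → ℚ := fun j => ({y : Fin m → ℝ | y ∈ ((j : ℕ) : ℝ) • Q ∧ isInt y}.ncard : ℚ)
    with haQ
  set bP : ℕ → ℚ := fun i => ({x : Fin n → ℝ | x ∈ ((i : ℕ) : ℝ) • P ∧ isInt x}.ncard : ℚ)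
    with hbP
  set dQ : ℕ → ℚ := fun j => ((Dset Q j).ncard : ℚ) with hdQ
  have hAB : ∀ k : ℕ, PowerSeries.coeff k (ehr P * ehr Q)
      = ∑ j ∈ Finset.range (k + 1), aQ j * bP (k - j) := by
    intro k
    rw [PowerSeries.coeff_mul, Finset.Nat.sum_antidiagonal_eq_sum_range_succ_mk,
      ← Finset.sum_range_reflect]
    refine Finset.sum_congr rfl fun j hj => ?_
    have hj' : j ≤ k := by
      rw [Finset.mem_range, Nat.lt_succ_iff] at hj
      exact hj
    rw [show k + 1 - 1 - j = k - j from by omega, show k - (k - j) = j from by omega,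
      ehr_coeff, ehr_coeff]
    ring
  have hcount : ∀ k : ℕ, PowerSeries.coeff k (ehr (convexHull ℝ
        ((fun p : Fin n → ℝ => Fin.append p (0 : Fin m → ℝ)) '' P ∪
         (fun q : Fin m → ℝ => Fin.append (0 : Fin n → ℝ) q) '' Q)))
      = ∑ j ∈ Finset.range (k + 1), bP (k - j) * dQ j := by
    intro k
    rw [ehr_coeff, count_freeSum hP hQc h0Q hPb hQb k]
    push_cast
    rfl
  have h0 : dQ 0 = aQ 0 := by
    simp only [hdQ, haQ]
    exact_mod_cast congrArg (Nat.cast (R := ℚ)) (Dset_card_zero Q)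
  have hs : ∀ j, dQ (j + 1) + aQ j = aQ (j + 1) := by
    intro j
    simp only [hdQ, haQ]
    exact_mod_cast congrArg (Nat.cast (R := ℚ)) (Dset_card_succ hQc h0Q hQb j)
  ext k
  rw [mul_sub, mul_one, map_sub, hcount k, hAB k]
  rcases Nat.eq_zero_or_pos k with rfl | hk
  · rw [PowerSeries.coeff_zero_mul_X, sub_zero]
    have := telescope_sum aQ bP dQ h0 hs 0
    simpa using this
  · cases k with
    | zero => exact absurd hk (lt_irrefl 0)
    | succ k' =>
      rw [PowerSeries.coeff_succ_mul_X, hAB k']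
      have ht := telescope_sum aQ bP dQ h0 hs (k' + 1)
      rw [show k' + 1 - 1 = k' from rfl] at ht
      exact eq_sub_of_add_eq ht



/-- If `P` and `Q` are reflexive polytopes with `0` in the interior of `P`
such that `P ⊕ Q = conv(P ∪ Q)` is a free sum (here realized with `P` and `Q` lying in
orthogonal coordinate subspaces and `P ∩ Q = {0}`), then the h*-polynomial of `P ⊕ Q`
is the product of those of `P` and `Q`. -/
theorem stmt_4 (n m : ℕ) (P : Set (Fin n → ℝ)) (Q : Set (Fin m → ℝ))
    (hP : isReflexive0 P) (hQ : isReflexive Q) (h0Q : (0 : Fin m → ℝ) ∈ Q)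
    (hp hq hpq : Polynomial ℚ)
    (hhp : (hp : PowerSeries ℚ) = ehr P * (1 - PowerSeries.X) ^ (n + 1))
    (hhq : (hq : PowerSeries ℚ) = ehr Q * (1 - PowerSeries.X) ^ (m + 1))
    (hhpq : (hpq : PowerSeries ℚ) =
      ehr (convexHull ℝ
        ((fun p : Fin n → ℝ => Fin.append p (0 : Fin m → ℝ)) '' P ∪
         (fun q : Fin m → ℝ => Fin.append (0 : Fin n → ℝ) q) '' Q)) *
        (1 - PowerSeries.X) ^ (n + m + 1)) :
    hpq = hp * hq := by
  obtain ⟨t, htint, hR⟩ := hQ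
  have hRconv : Convex ℝ ((fun x => x - t) '' Q) := hR.1.convex
  have hRcomp := hR.1.isCompact
  have hQeq : Q = (fun x => t + x) '' ((fun x => x - t) '' Q) := by
    ext x
    constructor
    · intro hx
      refine ⟨x - t, ⟨x, hx, rfl⟩, ?_⟩
      funext i
      simp [Pi.add_apply, Pi.sub_apply]
    · rintro ⟨_, ⟨q, hq', rfl⟩, rfl⟩
      have heq : t + (q - t) = q := by
        funext i
        simp [Pi.add_apply, Pi.sub_apply]
      show t + (q - t) ∈ Q
      rwa [heq]
  have hQc : Convex ℝ Q := by rw [hQeq]; exact hRconv.translate t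
  have hQb : Bornology.IsBounded Q := by
    rw [hQeq]
    exact ((hRcomp.image (continuous_add_left t)).isBounded)
  have key := ehr_freeSum hP hQc h0Q hQb
  apply Polynomial.coe_inj.mp
  rw [Polynomial.coe_mul, hhpq, hhp, hhq, key]
  ring
end

section
/- For each d ≥ 3, the simplex Δ = conv{e_1, ..., e_d, (-d, -d-1, ..., -d-1)} ⊂ R^d (the last vertex having first coordinate -d and remaining coordinates -(d+1)) is reflexive, with weight vector Q = (1, d, d+1, ..., d+1) (with d+1 appearing d-1 times): i.e., 1·(-d,-d-1,...,-d-1) + d·e_1 + (d+1)·(e_2 + ... + e_d) = 0. -/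
/-- The vertices `e_1, ..., e_d, (-d, -d-1, ..., -d-1)` of the simplex `Δ_Q` with
`Q = (1, d, d+1, ..., d+1)`. -/
noncomputable def dVert (d : ℕ) : Fin (d+1) → Fin d → ℝ :=
  Fin.snoc (fun k j => if j = k then 1 else 0)
    (fun j => if (j : ℕ) = 0 then -(d : ℝ) else -(d : ℝ) - 1)


noncomputable def dDual (d : ℕ) : Fin (d+1) → Fin d → ℝ :=
  Fin.snoc (fun k j => if j = k then 1 - (if (k:ℕ) = 0 then (d:ℝ)+1 else (d:ℝ)) else 1)
    (fun _ => 1)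

/-- The numbers `q / q_i`. -/
noncomputable def dC (d : ℕ) : Fin (d+1) → ℝ :=
  Fin.snoc (fun k => if (k:ℕ) = 0 then (d:ℝ)+1 else (d:ℝ)) ((d:ℝ)*((d:ℝ)+1))

lemma sumif (d : ℕ) [NeZero d] (A B : ℝ) :
    ∑ k : Fin d, (if (k:ℕ) = 0 then A else B) = A + ((d:ℝ)-1)*B := by
  have h : ∀ k : Fin d, (if (k:ℕ) = 0 then A else B)
      = B + (if k = 0 then A - B else 0) := by
    intro k
    by_cases hk : k = 0
    · subst hk; simp
    · have hk' : (k:ℕ) ≠ 0 := by rwa [Ne, Fin.val_eq_zero_iff]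
      rw [if_neg hk', if_neg hk]; ring
  rw [Finset.sum_congr rfl fun k _ => h k, Finset.sum_add_distrib,
    Finset.sum_ite_eq' Finset.univ (0 : Fin d)]
  simp
  ring

section
variable (d : ℕ) (hd : 3 ≤ d)
include hd

lemma hc_pos : ∀ i, 0 < dC d i := by
  have h3 : (3:ℝ) ≤ (d:ℝ) := by exact_mod_cast hd
  intro i
  induction i using Fin.lastCases with
  | last => simp only [dC, Fin.snoc_last]; nlinarith
  | cast k => simp only [dC, Fin.snoc_castSucc]; split <;> nlinarith

lemma hcs : ∑ i, (dC d i)⁻¹ = 1 := by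
  haveI : NeZero d := ⟨by omega⟩
  have h3 : (3:ℝ) ≤ (d:ℝ) := by exact_mod_cast hd
  have hd0 : (d:ℝ) ≠ 0 := by linarith
  have hd1 : (d:ℝ)+1 ≠ 0 := by linarith
  rw [Fin.sum_univ_castSucc]
  simp only [dC, Fin.snoc_castSucc, Fin.snoc_last]
  have h : ∀ k : Fin d, ((if (k:ℕ) = 0 then (d:ℝ)+1 else (d:ℝ)))⁻¹
      = (if (k:ℕ) = 0 then ((d:ℝ)+1)⁻¹ else ((d:ℝ))⁻¹) := by
    intro k; split <;> rfl
  rw [Finset.sum_congr rfl fun k _ => h k, sumif]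
  field_simp
  ring

lemma sumcinv : ∑ k : Fin d, (if (k:ℕ) = 0 then (d:ℝ)+1 else (d:ℝ))⁻¹
    = 1 - ((d:ℝ)*((d:ℝ)+1))⁻¹ := by
  have := hcs d hd
  rw [Fin.sum_univ_castSucc] at this
  simp only [dC, Fin.snoc_castSucc, Fin.snoc_last] at this
  linarith

end

section
variable (d : ℕ) (hd : 3 ≤ d)
include hd

lemma hdot_ub : ∀ i j, ∑ t, dVert d i t * dDual d j t
    = if j = i then 1 - dC d i else 1 := by
  haveI : NeZero d := ⟨by omega⟩
  have h3 : (3:ℝ) ≤ (d:ℝ) := by exact_mod_cast hd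
  intro i j
  induction i using Fin.lastCases with
  | last =>
    induction j using Fin.lastCases with
    | last =>
      simp only [dVert, dDual, dC, Fin.snoc_last, if_pos rfl, mul_one]
      rw [sumif]
      push_cast
      ring
    | cast l =>
      rw [if_neg (by simp [Fin.ext_iff]; omega)]
      simp only [dVert, dDual, Fin.snoc_last, Fin.snoc_castSucc]
      set D := (d:ℝ)
      set c' := (if (l:ℕ) = 0 then D+1 else D) with hc'
      have h : ∀ t : Fin d, (if (t:ℕ) = 0 then -D else -D-1) * (if t = l then 1 - c' else 1)
          = (if (t:ℕ) = 0 then -D else -D-1)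
            + (if t = l then -c' * (if (t:ℕ) = 0 then -D else -D-1) else 0) := by
        intro t
        by_cases h2 : t = l
        · subst h2; by_cases h1 : (t:ℕ) = 0 <;> simp [h1] <;> ring
        · by_cases h1 : (t:ℕ) = 0 <;> simp [h1, h2] <;> ring
      rw [Finset.sum_congr rfl fun t _ => h t, Finset.sum_add_distrib, sumif,
        Finset.sum_ite_eq' Finset.univ l]
      simp only [Finset.mem_univ, if_true, hc']
      by_cases hl : (l:ℕ) = 0 <;> simp only [hl, if_true, if_false] <;> ring_nf <;> (rw [show ((d:ℕ):ℝ) = D from rfl]; ring)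
  | cast k =>
    induction j using Fin.lastCases with
    | last =>
      rw [if_neg (by simp [Fin.ext_iff]; omega)]
      simp only [dVert, dDual, Fin.snoc_last, Fin.snoc_castSucc, mul_one,
        Finset.sum_ite_eq' Finset.univ k]
      simp
    | cast l =>
      simp only [dVert, dDual, dC, Fin.snoc_castSucc, ite_mul, one_mul, zero_mul,
        Finset.sum_ite_eq' Finset.univ k, Finset.mem_univ, if_true, Fin.castSucc_inj]
      by_cases h : k = l
      · subst h; simp
      · rw [if_neg h, if_neg (Ne.symm h)]

end

section
variable (d : ℕ) (hd : 3 ≤ d)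
include hd

lemma hzero_u : ∀ t, ∑ i, (dC d i)⁻¹ * dVert d i t = 0 := by
  haveI : NeZero d := ⟨by omega⟩
  have h3 : (3:ℝ) ≤ (d:ℝ) := by exact_mod_cast hd
  have hd0 : (d:ℝ) ≠ 0 := by linarith
  have hd1 : (d:ℝ)+1 ≠ 0 := by linarith
  intro t
  rw [Fin.sum_univ_castSucc]
  simp only [dC, dVert, Fin.snoc_castSucc, Fin.snoc_last, mul_ite, mul_one, mul_zero,
    Finset.sum_ite_eq Finset.univ t, Finset.mem_univ, if_true]
  by_cases ht : (t:ℕ) = 0 <;> simp only [ht, if_true, if_false] <;> field_simp <;> ring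

lemma hzero_b : ∀ t, ∑ i, (dC d i)⁻¹ * dDual d i t = 0 := by
  haveI : NeZero d := ⟨by omega⟩
  have h3 : (3:ℝ) ≤ (d:ℝ) := by exact_mod_cast hd
  have hd0 : (d:ℝ) ≠ 0 := by linarith
  have hd1 : (d:ℝ)+1 ≠ 0 := by linarith
  intro t
  rw [Fin.sum_univ_castSucc]
  simp only [dC, dDual, Fin.snoc_castSucc, Fin.snoc_last, mul_one]
  set D := (d:ℝ)
  have h : ∀ k : Fin d, (if (k:ℕ) = 0 then D+1 else D)⁻¹
        * (if t = k then 1 - (if (k:ℕ) = 0 then D+1 else D) else 1)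
      = (if (k:ℕ) = 0 then D+1 else D)⁻¹ + (if t = k then -1 else 0) := by
    intro k
    have hck : (if (k:ℕ) = 0 then D+1 else D) ≠ 0 := by split <;> assumption
    by_cases h2 : t = k
    · rw [if_pos h2, if_pos h2, mul_sub, mul_one, inv_mul_cancel₀ hck]; ring
    · rw [if_neg h2, if_neg h2, mul_one, add_zero]
  rw [Finset.sum_congr rfl fun k _ => h k, Finset.sum_add_distrib,
    Finset.sum_ite_eq Finset.univ t, sumcinv d hd]
  simp only [Finset.mem_univ, if_true]
  field_simp
  ring

lemma hdot_bu : ∀ i j, ∑ t, dDual d i t * dVert d j t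
    = if j = i then 1 - dC d i else 1 := by
  intro i j
  have hcomm : ∑ t, dDual d i t * dVert d j t = ∑ t, dVert d j t * dDual d i t :=
    Finset.sum_congr rfl fun t _ => mul_comm _ _
  rw [hcomm, hdot_ub d hd j i]
  by_cases h : i = j
  · subst h; simp
  · rw [if_neg h, if_neg (Ne.symm h)]

lemma hinj_u : ∀ y z : Fin d → ℝ,
    (∀ i, ∑ t, dVert d i t * y t = ∑ t, dVert d i t * z t) → y = z := by
  intro y z h
  funext t
  have := h (Fin.castSucc t)
  simpa [dVert, Fin.snoc_castSucc, ite_mul, Finset.sum_ite_eq' Finset.univ t] using this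

lemma hinj_b : ∀ y z : Fin d → ℝ,
    (∀ i, ∑ t, dDual d i t * y t = ∑ t, dDual d i t * z t) → y = z := by
  have h3 : (3:ℝ) ≤ (d:ℝ) := by exact_mod_cast hd
  intro y z h
  have key : ∀ (k : Fin d) (w : Fin d → ℝ),
      ∑ t, dDual d (Fin.castSucc k) t * w t
        = (∑ t, w t) - (if (k:ℕ) = 0 then (d:ℝ)+1 else (d:ℝ)) * w k := by
    intro k w
    simp only [dDual, Fin.snoc_castSucc]
    set c' := (if (k:ℕ) = 0 then (d:ℝ)+1 else (d:ℝ))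
    have he : ∀ t : Fin d, (if t = k then 1 - c' else 1) * w t
        = w t - (if t = k then c' * w t else 0) := by
      intro t; split <;> ring
    rw [Finset.sum_congr rfl fun t _ => he t, Finset.sum_sub_distrib,
      Finset.sum_ite_eq' Finset.univ k]
    simp
  have hlast : ∑ t, y t = ∑ t, z t := by
    have := h (Fin.last d)
    simpa [dDual, Fin.snoc_last] using this
  funext k
  have hk := h (Fin.castSucc k)
  rw [key k y, key k z, hlast] at hk
  have hck : (if (k:ℕ) = 0 then (d:ℝ)+1 else (d:ℝ)) ≠ 0 := by
    split <;> intro hh <;> linarith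
  have : (if (k:ℕ) = 0 then (d:ℝ)+1 else (d:ℝ)) * y k
      = (if (k:ℕ) = 0 then (d:ℝ)+1 else (d:ℝ)) * z k := by linarith
  exact mul_left_cancel₀ hck this

end
lemma core {d m : ℕ} (u b : Fin m → Fin d → ℝ) (c : Fin m → ℝ)
    (hc : ∀ i, 0 < c i)
    (hdot : ∀ i j, ∑ t, u i t * b j t = if j = i then 1 - c i else 1)
    (hzero : ∀ t, ∑ i, (c i)⁻¹ * u i t = 0)
    (hcs : ∑ i, (c i)⁻¹ = 1)
    (hinj : ∀ y z : Fin d → ℝ, (∀ i, ∑ t, u i t * y t = ∑ t, u i t * z t) → y = z)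
    (x : Fin d → ℝ) (hx : ∀ i, ∑ t, u i t * x t ≤ 1) :
    x ∈ convexHull ℝ (Set.range b) := by
  set μ : Fin m → ℝ := fun i => (c i)⁻¹ * (1 - ∑ t, u i t * x t) with hμ
  have hμ0 : ∀ i ∈ Finset.univ, (0:ℝ) ≤ μ i := fun i _ =>
    mul_nonneg (inv_nonneg.2 (hc i).le) (by linarith [hx i])
  have hswap : ∑ i, (c i)⁻¹ * ∑ t, u i t * x t = 0 := by
    have : ∑ i, (c i)⁻¹ * ∑ t, u i t * x t
        = ∑ t, (∑ i, (c i)⁻¹ * u i t) * x t := by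
      simp_rw [Finset.mul_sum, Finset.sum_mul]
      rw [Finset.sum_comm]
      congr 1; ext i; congr 1; ext t; ring
    rw [this]
    simp [hzero]
  have hμ1 : ∑ i, μ i = 1 := by
    simp_rw [hμ, mul_sub, mul_one, Finset.sum_sub_distrib, hcs, hswap, sub_zero]
  have hxe : x = ∑ i, μ i • b i := by
    apply hinj
    intro i
    have hrhs : ∑ t, u i t * (∑ j, μ j • b j) t = ∑ j, μ j * ∑ t, u i t * b j t := by
      simp only [Finset.sum_apply, Pi.smul_apply, smul_eq_mul]
      simp_rw [Finset.mul_sum]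
      rw [Finset.sum_comm]
      congr 1; ext j; congr 1; ext t; ring
    rw [hrhs]
    simp_rw [hdot]
    have h1 : ∑ j, μ j * (if j = i then 1 - c i else 1) = 1 - μ i * c i := by
      have he : ∀ j, μ j * (if j = i then 1 - c i else 1)
          = μ j - (if j = i then μ j * c i else 0) := by
        intro j; split <;> ring
      rw [Finset.sum_congr rfl fun j _ => he j, Finset.sum_sub_distrib, hμ1,
        Finset.sum_ite_eq' Finset.univ i]
      simp
    rw [h1]
    have hci : c i ≠ 0 := (hc i).ne'
    simp only [hμ]
    field_simp
    ring
  rw [hxe]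
  exact Convex.sum_mem (convex_convexHull ℝ _) hμ0 hμ1
    (fun i _ => subset_convexHull ℝ _ ⟨i, rfl⟩)

lemma halfspace_convex {d : ℕ} (y : Fin d → ℝ) :
    Convex ℝ {x : Fin d → ℝ | ∑ t, x t * y t ≤ 1} := by
  intro a ha b hb s r hs hr hsr
  simp only [Set.mem_setOf_eq] at *
  have e : ∑ t, (s • a + r • b) t * y t
      = s * (∑ t, a t * y t) + r * (∑ t, b t * y t) := by
    simp only [Pi.add_apply, Pi.smul_apply, smul_eq_mul, Finset.mul_sum]
    rw [← Finset.sum_add_distrib]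
    congr 1; ext t; ring
  rw [e]
  nlinarith

/-- For `d ≥ 3`, the simplex `Δ = conv{e_1,...,e_d,(-d,-d-1,...,-d-1)}`
is reflexive, with weight vector `Q = (1, d, d+1, ..., d+1)`, i.e.
`1·(-d,-d-1,...,-d-1) + d·e_1 + (d+1)·(e_2 + ... + e_d) = 0`. -/
theorem stmt_11 (d : ℕ) (hd : 3 ≤ d) :
    isReflexive0 (convexHull ℝ (Set.range (dVert d))) ∧
    dVert d (Fin.last d) + (d : ℝ) • (fun j : Fin d => if (j : ℕ) = 0 then (1:ℝ) else 0)
      + ((d : ℝ) + 1) • ∑ k ∈ Finset.univ.filter (fun k : Fin d => (k : ℕ) ≠ 0),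
          (fun j : Fin d => if j = k then (1:ℝ) else 0) = 0 := by
  haveI : NeZero d := ⟨by omega⟩
  have h3 : (3:ℝ) ≤ (d:ℝ) := by exact_mod_cast hd
  set P := convexHull ℝ (Set.range (dVert d)) with hP
  constructor
  · -- reflexivity
    have hlatP : isLatticePolytope P := by
      refine ⟨(Set.finite_range (dVert d)).toFinset, ?_, by
        rw [Set.Finite.coe_toFinset]⟩
      intro v hv
      rw [Set.Finite.mem_toFinset] at hv
      obtain ⟨i, rfl⟩ := hv
      induction i using Fin.lastCases with
      | last =>
        intro j
        by_cases hj : (j:ℕ) = 0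
        · exact ⟨-(d:ℤ), by simp [dVert, Fin.snoc_last, hj, Fin.val_eq_zero_iff.mp hj]⟩
        · exact ⟨-(d:ℤ)-1, by simp [dVert, Fin.snoc_last, hj, Fin.val_ne_zero_iff.mp hj]⟩
      | cast k =>
        intro j
        refine ⟨if j = k then 1 else 0, ?_⟩
        simp only [dVert, Fin.snoc_castSucc]
        split <;> simp
    -- halfspace description of the dual
    have hdualeq : polarDual P = convexHull ℝ (Set.range (dDual d)) := by
      apply Set.Subset.antisymm
      · intro x hx
        exact core (dVert d) (dDual d) (dC d) (hc_pos d hd) (hdot_ub d hd)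
          (hzero_u d hd) (hcs d hd) (hinj_u d hd) x
          (fun i => hx _ (subset_convexHull ℝ _ ⟨i, rfl⟩))
      · intro x hx p hp
        -- p ∈ P, want ∑ p t * x t ≤ 1; first bound for vertices of the dual
        have hxin : x ∈ {y : Fin d → ℝ | ∀ i, ∑ t, dVert d i t * y t ≤ 1} := by
          have hsub : Set.range (dDual d) ⊆
              {y : Fin d → ℝ | ∀ i, ∑ t, dVert d i t * y t ≤ 1} := by
            rintro _ ⟨j, rfl⟩ i
            rw [hdot_ub d hd i j]
            split
            · nlinarith [hc_pos d hd i]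
            · exact le_rfl
          have hconv : Convex ℝ {y : Fin d → ℝ | ∀ i, ∑ t, dVert d i t * y t ≤ 1} := by
            have heq : {y : Fin d → ℝ | ∀ i, ∑ t, dVert d i t * y t ≤ 1}
                = ⋂ i, {y : Fin d → ℝ | ∑ t, y t * dVert d i t ≤ 1} := by
              ext y
              simp only [Set.mem_setOf_eq, Set.mem_iInter]
              constructor <;> intro h i <;> simpa [mul_comm] using h i
            rw [heq]
            exact convex_iInter fun i => halfspace_convex _
          exact convexHull_min hsub hconv hx
        -- now p ∈ convexHull of vertices, use halfspace for x
        have : P ⊆ {q : Fin d → ℝ | ∑ t, q t * x t ≤ 1} := by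
          apply convexHull_min _ (halfspace_convex x)
          rintro _ ⟨i, rfl⟩
          exact hxin i
        exact this hp
    have hlatD : isLatticePolytope (polarDual P) := by
      rw [hdualeq]
      refine ⟨(Set.finite_range (dDual d)).toFinset, ?_, by
        rw [Set.Finite.coe_toFinset]⟩
      intro v hv
      rw [Set.Finite.mem_toFinset] at hv
      obtain ⟨i, rfl⟩ := hv
      induction i using Fin.lastCases with
      | last => intro j; exact ⟨1, by simp [dDual, Fin.snoc_last]⟩
      | cast k =>
        intro j
        by_cases hj : j = k
        · by_cases hk : (k:ℕ) = 0
          · exact ⟨-(d:ℤ), by simp [dDual, Fin.snoc_castSucc, hj, hk, Fin.val_eq_zero_iff.mp hk]⟩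
          · exact ⟨1-(d:ℤ), by simp [dDual, Fin.snoc_castSucc, hj, hk, Fin.val_ne_zero_iff.mp hk]⟩
        · exact ⟨1, by simp [dDual, Fin.snoc_castSucc, hj]⟩
    have hint : (0 : Fin d → ℝ) ∈ interior P := by
      set S := ⋂ i, {x : Fin d → ℝ | ∑ t, dDual d i t * x t < 1} with hS
      have hSopen : IsOpen S := by
        apply isOpen_iInter_of_finite
        intro i
        exact isOpen_lt (by fun_prop) continuous_const
      have hS0 : (0 : Fin d → ℝ) ∈ S := by
        simp [hS]
      have hSsub : S ⊆ P := by
        intro x hx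
        exact core (dDual d) (dVert d) (dC d) (hc_pos d hd) (hdot_bu d hd)
          (hzero_b d hd) (hcs d hd) (hinj_b d hd) x
          (fun i => le_of_lt (by exact Set.mem_iInter.1 hx i))
      exact interior_maximal hSsub hSopen hS0
    exact ⟨hlatP, hint, hlatD⟩
  · -- the linear relation
    funext j
    simp only [Pi.add_apply, Pi.smul_apply, smul_eq_mul, Finset.sum_apply,
      dVert, Fin.snoc_last, Pi.zero_apply]
    by_cases hj : (j:ℕ) = 0
    · rw [if_pos hj, if_pos hj]
      have : ∑ k ∈ Finset.univ.filter (fun k : Fin d => (k:ℕ) ≠ 0),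
          (if j = k then (1:ℝ) else 0) = 0 := by
        apply Finset.sum_eq_zero
        intro k hk
        rw [Finset.mem_filter] at hk
        rw [if_neg]
        intro hjk; exact hk.2 (hjk ▸ hj)
      rw [this]; ring
    · rw [if_neg hj, if_neg hj]
      have hjf : j ∈ Finset.univ.filter (fun k : Fin d => (k:ℕ) ≠ 0) := by
        simp [hj, Fin.val_ne_zero_iff.mp hj]
      have : ∑ k ∈ Finset.univ.filter (fun k : Fin d => (k:ℕ) ≠ 0),
          (if j = k then (1:ℝ) else 0) = 1 := by
        rw [Finset.sum_ite_eq _ j, if_pos hjf]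
      rw [this]; ring
end

section
/- For d ≥ 3, the simplex Δ with vertices e_1, ..., e_d, (-d, -d-1, ..., -d-1) in R^d is integrally closed: every lattice point of mΔ (m a positive integer) is a sum of m lattice points of Δ. -/
open Pointwise in
/-- `P` is integrally closed: every lattice point of the dilate `mP` is a sum of `m`
lattice points of `P`. -/
def isIntegrallyClosed {n : ℕ} (P : Set (Fin n → ℝ)) : Prop :=
  ∀ m : ℕ, 0 < m → ∀ x ∈ (m : ℝ) • P, isInt x →
    ∃ f : Fin m → Fin n → ℝ, (∀ k, f k ∈ P ∧ isInt (f k)) ∧ x = ∑ k, f k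


lemma exists_weights {N n : ℕ} {f : Fin N → Fin n → ℝ} {p : Fin n → ℝ}
    (hp : p ∈ convexHull ℝ (Set.range f)) :
    ∃ lam : Fin N → ℝ, (∀ i, 0 ≤ lam i) ∧ ∑ i, lam i = 1 ∧ p = ∑ i, lam i • f i := by
  rw [mem_convexHull_iff_exists_fintype] at hp
  obtain ⟨ι, _, w, z, hw0, hw1, hz, hx⟩ := hp
  choose g hg using hz
  refine ⟨fun i => ∑ t ∈ Finset.univ.filter (fun t => g t = i), w t, ?_, ?_, ?_⟩
  · intro i; exact Finset.sum_nonneg fun t _ => hw0 t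
  · rw [← hw1]; exact Finset.sum_fiberwise _ _ _
  · rw [← hx, ← Finset.sum_fiberwise Finset.univ g (fun t => w t • z t)]
    refine Finset.sum_congr rfl fun i _ => ?_
    rw [Finset.sum_smul]
    refine Finset.sum_congr rfl fun t ht => ?_
    rw [Finset.mem_filter] at ht
    rw [← ht.2, hg]

def Wz (d : ℕ) (j : Fin d) : ℤ := if (j : ℕ) = 0 then (d:ℤ)+1 else (d:ℤ)

open Pointwise in
lemma mem_iff (d : ℕ) (hd : 3 ≤ d) (c : ℝ) (hc : 0 < c) (x : Fin d → ℝ) :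
    x ∈ c • convexHull ℝ (Set.range (dVert d)) ↔
      (0 ≤ c - ∑ j, x j ∧ ∀ j, 0 ≤ ((Wz d j : ℤ) : ℝ) * x j + (c - ∑ j, x j)) := by
  haveI : NeZero d := ⟨by omega⟩
  have hdr : (3:ℝ) ≤ (d:ℝ) := by exact_mod_cast hd
  have hcne : c ≠ 0 := hc.ne'
  have hdne : (d:ℝ) ≠ 0 := by linarith
  have hd1ne : (d:ℝ) + 1 ≠ 0 := by linarith
  have hcard : (Finset.univ.erase (0 : Fin d)).card = d - 1 := by
    rw [Finset.card_erase_of_mem (Finset.mem_univ _), Finset.card_univ, Fintype.card_fin]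
  have hcardr : (((Finset.univ.erase (0 : Fin d)).card : ℕ) : ℝ) = (d:ℝ) - 1 := by
    rw [hcard]; push_cast [Nat.cast_sub (by omega : 1 ≤ d)]; ring
  have hne0 : ∀ j : Fin d, j ∈ Finset.univ.erase (0 : Fin d) → (j:ℕ) ≠ 0 := by
    intro j hj
    have := (Finset.mem_erase.mp hj).1
    exact fun h => this (Fin.ext (h.trans (Fin.val_zero d).symm))
  constructor
  · rintro hx
    obtain ⟨p, hp, rfl⟩ := Set.mem_smul_set.mp hx
    obtain ⟨lam, hlam0, hlam1, hpe⟩ := exists_weights hp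
    set μ := lam (Fin.last d) with hμ
    have hcoord : ∀ j, (c • p) j =
        c * lam (Fin.castSucc j) + c * μ * (if (j:ℕ) = 0 then -(d:ℝ) else -(d:ℝ)-1) := by
      intro j
      have hpj : p j = lam (Fin.castSucc j) + μ * (if (j:ℕ) = 0 then -(d:ℝ) else -(d:ℝ)-1) := by
        rw [hpe, Finset.sum_apply, Fin.sum_univ_castSucc]
        simp only [Pi.smul_apply, smul_eq_mul, dVert, Fin.snoc_castSucc, Fin.snoc_last]
        rw [Finset.sum_congr rfl (fun k _ => by rw [mul_ite, mul_one, mul_zero])]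
        rw [Finset.sum_ite_eq]
        simp
        rfl
      rw [Pi.smul_apply, smul_eq_mul, hpj]; ring
    have hlsum : ∑ k : Fin d, lam (Fin.castSucc k) = 1 - μ := by
      rw [Fin.sum_univ_castSucc] at hlam1; linarith
    have hvsum : ∑ j : Fin d, (if (j:ℕ) = 0 then -(d:ℝ) else -(d:ℝ)-1)
        = -(d:ℝ)*(d:ℝ)-(d:ℝ)+1 := by
      rw [← Finset.add_sum_erase _ _ (Finset.mem_univ (0 : Fin d))]
      rw [Finset.sum_congr rfl (fun j hj => if_neg (hne0 j hj))]
      rw [Finset.sum_const, nsmul_eq_mul, hcardr]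
      norm_num; ring
    have hsum : ∑ j, (c • p) j = c * (1-μ) + c * μ * (-(d:ℝ)*(d:ℝ)-(d:ℝ)+1) := by
      rw [Finset.sum_congr rfl (fun j _ => hcoord j), Finset.sum_add_distrib,
        ← Finset.mul_sum, ← Finset.mul_sum, hlsum, hvsum]
    have hs : c - ∑ j, (c • p) j = c * μ * ((d:ℝ)*(d:ℝ)+(d:ℝ)) := by
      rw [hsum]; ring
    have hμ0 : 0 ≤ μ := hlam0 _
    constructor
    · rw [hs]
      have : (0:ℝ) ≤ (d:ℝ)*(d:ℝ)+(d:ℝ) := by nlinarith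
      exact mul_nonneg (mul_nonneg hc.le hμ0) this
    · intro j
      by_cases h : (j:ℕ) = 0
      · have : ((Wz d j : ℤ) : ℝ) * (c • p) j + (c - ∑ j, (c • p) j)
            = c * ((d:ℝ)+1) * lam (Fin.castSucc j) := by
          rw [hcoord j, hs, Wz, if_pos h, if_pos h]
          push_cast; ring
        rw [this]
        exact mul_nonneg (mul_nonneg hc.le (by linarith)) (hlam0 _)
      · have : ((Wz d j : ℤ) : ℝ) * (c • p) j + (c - ∑ j, (c • p) j)
            = c * (d:ℝ) * lam (Fin.castSucc j) := by
          rw [hcoord j, hs, Wz, if_neg h, if_neg h]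
          push_cast; ring
        rw [this]
        exact mul_nonneg (mul_nonneg hc.le (by linarith)) (hlam0 _)
  · rintro ⟨h1, h2⟩
    set s := c - ∑ j, x j with hsdef
    have hW : ∀ k : Fin d, (0:ℝ) < ((Wz d k : ℤ) : ℝ) := by
      intro k; rw [Wz]; split <;> push_cast <;> linarith
    set lam : Fin (d+1) → ℝ :=
      Fin.snoc (fun k => (((Wz d k : ℤ):ℝ) * x k + s)/(c * ((Wz d k : ℤ):ℝ)))
        (s/(c*((d:ℝ)*(d:ℝ)+(d:ℝ)))) with hlam
    have hlam0 : ∀ i, 0 ≤ lam i := by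
      intro i
      refine Fin.lastCases ?_ ?_ i
      · rw [hlam, Fin.snoc_last]
        exact div_nonneg h1 (by nlinarith)
      · intro k
        rw [hlam, Fin.snoc_castSucc]
        exact div_nonneg (h2 k) (by nlinarith [hW k])
    have hlam1 : ∑ i, lam i = 1 := by
      rw [Fin.sum_univ_castSucc]
      simp only [hlam, Fin.snoc_castSucc, Fin.snoc_last]
      have hterm : ∀ k : Fin d, (((Wz d k : ℤ):ℝ) * x k + s)/(c * ((Wz d k : ℤ):ℝ))
          = x k / c + s / (c * ((Wz d k : ℤ):ℝ)) := by
        intro k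
        have := (hW k).ne'
        field_simp
      rw [Finset.sum_congr rfl (fun k _ => hterm k), Finset.sum_add_distrib]
      have hsum2 : ∑ k : Fin d, s / (c * ((Wz d k : ℤ):ℝ))
          = s/(c*((d:ℝ)+1)) + ((d:ℝ)-1) * (s/(c*(d:ℝ))) := by
        rw [← Finset.add_sum_erase _ _ (Finset.mem_univ (0 : Fin d))]
        congr 1
        · have : ((0:Fin d):ℕ) = 0 := Fin.val_zero d
          rw [Wz, if_pos this]; push_cast; ring_nf
        · rw [Finset.sum_congr rfl (fun j hj => by rw [Wz, if_neg (hne0 j hj)]),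
            Finset.sum_const, nsmul_eq_mul, hcardr]
          push_cast; ring_nf
      rw [hsum2, ← Finset.sum_div]
      have hxs : ∑ j, x j = c - s := by rw [hsdef]; ring
      rw [hxs]
      field_simp
      ring
    refine Set.mem_smul_set.mpr ⟨c⁻¹ • x, ?_, smul_inv_smul₀ hcne x⟩
    refine mem_convexHull_of_exists_fintype lam (dVert d) hlam0 hlam1
      (fun i => Set.mem_range_self i) ?_
    funext j
    rw [Finset.sum_apply, Fin.sum_univ_castSucc]
    simp only [hlam, Pi.smul_apply, smul_eq_mul, dVert, Fin.snoc_castSucc, Fin.snoc_last]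
    rw [Finset.sum_congr rfl (fun k _ => by rw [mul_ite, mul_one, mul_zero])]
    rw [Finset.sum_ite_eq]
    simp only [Finset.mem_univ, if_pos]
    by_cases h : (j:ℕ) = 0
    · rw [Wz, if_pos h, if_pos h]
      push_cast
      field_simp
      ring
    · rw [Wz, if_neg h, if_neg h]
      push_cast
      field_simp
      ring

open Pointwise in
lemma greedy (d : ℕ) (hd : 3 ≤ d) (m : ℕ) (hm : 1 ≤ m) (z : Fin d → ℤ)
    (hx : (fun j => ((z j : ℤ):ℝ)) ∈ ((m:ℝ)+1) • convexHull ℝ (Set.range (dVert d))) :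
    ∃ y : Fin d → ℤ, ((fun j => ((y j : ℤ):ℝ)) ∈ convexHull ℝ (Set.range (dVert d)))
      ∧ (fun j => (((z j - y j : ℤ)):ℝ)) ∈ (m:ℝ) • convexHull ℝ (Set.range (dVert d)) := by
  haveI : NeZero d := ⟨by omega⟩
  have hdz : (3:ℤ) ≤ (d:ℤ) := by exact_mod_cast hd
  have hmz : (1:ℤ) ≤ (m:ℤ) := by exact_mod_cast hm
  have hmr : (1:ℝ) ≤ (m:ℝ) := by exact_mod_cast hm
  have hne0 : ∀ j : Fin d, j ∈ Finset.univ.erase (0 : Fin d) → (j:ℕ) ≠ 0 := by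
    intro j hj
    exact fun h => (Finset.mem_erase.mp hj).1 (Fin.ext (h.trans (Fin.val_zero d).symm))
  have hcard : (((Finset.univ.erase (0 : Fin d)).card : ℕ) : ℤ) = (d:ℤ) - 1 := by
    rw [Finset.card_erase_of_mem (Finset.mem_univ _), Finset.card_univ, Fintype.card_fin]
    push_cast [Nat.cast_sub (by omega : 1 ≤ d)]
    ring
  obtain ⟨h1r, h2r⟩ := (mem_iff d hd ((m:ℝ)+1) (by linarith) _).mp hx
  set S : ℤ := (m:ℤ) + 1 - ∑ j, z j with hSdef
  set A : Fin d → ℤ := fun j => Wz d j * z j + S with hAdef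
  have hSr : ((S:ℤ):ℝ) = (m:ℝ) + 1 - ∑ j, ((z j : ℤ):ℝ) := by rw [hSdef]; push_cast; ring
  have hS : (0:ℤ) ≤ S := by
    have : (0:ℝ) ≤ ((S:ℤ):ℝ) := by rw [hSr]; exact h1r
    exact_mod_cast this
  have hA : ∀ j, 0 ≤ A j := by
    intro j
    have : (0:ℝ) ≤ ((A j:ℤ):ℝ) := by
      rw [hAdef]; push_cast
      have := h2r j
      rw [← hSr] at this
      push_cast at this
      linarith
    exact_mod_cast this
  -- the key "finish" step
  have finish : ∀ (y : Fin d → ℤ) (t : ℤ), (∑ j, y j = 1 - t) → 0 ≤ t → t ≤ S →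
      (∀ j, 0 ≤ Wz d j * y j + t) → (∀ j, Wz d j * y j + t ≤ A j) →
      (∃ y : Fin d → ℤ, ((fun j => ((y j : ℤ):ℝ)) ∈ convexHull ℝ (Set.range (dVert d)))
        ∧ (fun j => (((z j - y j : ℤ)):ℝ)) ∈ (m:ℝ) • convexHull ℝ (Set.range (dVert d))) := by
    intro y t hsy ht0 htS hB0 hBA
    have hsyr : (∑ j, ((y j : ℤ):ℝ)) = 1 - ((t:ℤ):ℝ) := by exact_mod_cast hsy
    have htr : (0:ℝ) ≤ ((t:ℤ):ℝ) := by exact_mod_cast ht0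
    refine ⟨y, ?_, ?_⟩
    · have hmem := (mem_iff d hd 1 one_pos (fun j => ((y j : ℤ):ℝ))).mpr ⟨?_, ?_⟩
      · simpa using hmem
      · show (0:ℝ) ≤ 1 - ∑ j, ((y j : ℤ):ℝ)
        rw [hsyr]; linarith
      · intro j
        show (0:ℝ) ≤ ((Wz d j : ℤ):ℝ) * ((y j : ℤ):ℝ) + (1 - ∑ j, ((y j : ℤ):ℝ))
        rw [hsyr]
        have h := hB0 j
        have : (0:ℝ) ≤ ((Wz d j * y j + t : ℤ):ℝ) := by exact_mod_cast h
        push_cast at this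
        linarith
    · refine (mem_iff d hd (m:ℝ) (by linarith) _).mpr ⟨?_, ?_⟩
      · show (0:ℝ) ≤ (m:ℝ) - ∑ j, ((z j - y j : ℤ):ℝ)
        have hzz : ∑ j, ((z j - y j : ℤ):ℝ) = (∑ j, ((z j:ℤ):ℝ)) - ∑ j, ((y j:ℤ):ℝ) := by
          push_cast
          exact Finset.sum_sub_distrib _ _
        rw [hzz, hsyr]
        have hts : ((t:ℤ):ℝ) ≤ ((S:ℤ):ℝ) := by exact_mod_cast htS
        rw [hSr] at hts
        linarith
      · intro j
        show (0:ℝ) ≤ ((Wz d j : ℤ):ℝ) * ((z j - y j : ℤ):ℝ) + ((m:ℝ) - ∑ j, ((z j - y j : ℤ):ℝ))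
        have hzz : ∑ j, ((z j - y j : ℤ):ℝ) = (∑ j, ((z j:ℤ):ℝ)) - ∑ j, ((y j:ℤ):ℝ) := by
          push_cast
          exact Finset.sum_sub_distrib _ _
        have h := hBA j
        have hAj : ((Wz d j * y j + t : ℤ):ℝ) ≤ ((A j : ℤ):ℝ) := by exact_mod_cast h
        rw [hAdef] at hAj
        push_cast at hAj
        rw [hzz, hsyr]
        rw [hSr] at hAj
        push_cast
        linarith
  have hWpos : ∀ j : Fin d, 0 < Wz d j := by
    intro j; rw [Wz]; split <;> omega
  have hzsplit : ∑ j, z j = z 0 + ∑ j ∈ Finset.univ.erase (0:Fin d), z j :=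
    (Finset.add_sum_erase _ _ (Finset.mem_univ _)).symm
  have hA0 : A 0 = ((d:ℤ)+1) * z 0 + S := by
    simp only [hAdef, Wz, Fin.val_zero, if_pos]
  have hsumA : ∑ j ∈ Finset.univ.erase (0:Fin d), A j
      = (d:ℤ) * (∑ j ∈ Finset.univ.erase (0:Fin d), z j) + ((d:ℤ)-1) * S := by
    have h1 : ∀ j ∈ Finset.univ.erase (0:Fin d), A j = (d:ℤ) * z j + S := by
      intro j hj
      simp only [hAdef, Wz, if_neg (hne0 j hj)]
    rw [Finset.sum_congr rfl h1, Finset.sum_add_distrib, ← Finset.mul_sum, Finset.sum_const,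
      nsmul_eq_mul, hcard]
  have hE : (d:ℤ) * A 0 + ((d:ℤ)+1) * (∑ j ∈ Finset.univ.erase (0:Fin d), A j) + S
      = ((m:ℤ)+1) * ((d:ℤ)*((d:ℤ)+1)) := by
    rw [hA0, hsumA]
    have hS' : S = (m:ℤ) + 1 - (z 0 + ∑ j ∈ Finset.univ.erase (0:Fin d), z j) := by
      rw [hSdef, ← hzsplit]
    linear_combination ((d:ℤ)*(d:ℤ)+(d:ℤ)) * hS'
  by_cases hbig : ∃ j : Fin d, (j:ℕ) ≠ 0 ∧ (d:ℤ) ≤ A j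
  · obtain ⟨j0, hj0, hAj0⟩ := hbig
    refine finish (fun i => if i = j0 then 1 else 0) 0 ?_ le_rfl hS ?_ ?_
    · rw [Finset.sum_ite_eq' Finset.univ j0 (fun _ => (1:ℤ))]
      norm_num
    · intro j; by_cases h : j = j0
      · rw [if_pos h]; have := hWpos j; linarith
      · rw [if_neg h]; simp
    · intro j; by_cases h : j = j0
      · rw [if_pos h, h]
        have hw : Wz d j0 = (d:ℤ) := by rw [Wz, if_neg hj0]
        rw [hw]; linarith
      · rw [if_neg h]; simpa using hA j
  · push_neg at hbig
    set q : ℤ := S / d with hqdef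
    set β : ℤ := S % d with hbdef
    have hdz0 : (d:ℤ) ≠ 0 := by omega
    have hq : S = (d:ℤ) * q + β := (Int.mul_ediv_add_emod S d).symm
    have hb0 : 0 ≤ β := Int.emod_nonneg S hdz0
    have hbd : β < d := Int.emod_lt_of_pos S (by omega)
    have hq0 : 0 ≤ q := Int.ediv_nonneg hS (by omega)
    have hAβ : ∀ j : Fin d, (j:ℕ) ≠ 0 → A j = β := by
      intro j hj
      have h1 : A j % d = β := by
        have h2 : A j = S + (d:ℤ) * z j := by
          simp only [hAdef, Wz, if_neg hj]; ring
        rw [h2, hbdef, Int.add_mul_emod_self_left]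
      have h2 : A j < d := hbig j hj
      have h3 : 0 ≤ A j := hA j
      rw [← h1]
      exact (Int.emod_eq_of_lt h3 h2).symm
    have hsumβ : ∑ j ∈ Finset.univ.erase (0:Fin d), A j = ((d:ℤ)-1) * β := by
      rw [Finset.sum_congr rfl (fun j hj => hAβ j (hne0 j hj)), Finset.sum_const,
        nsmul_eq_mul, hcard]
    have hkey : A 0 + (d:ℤ) * β + q = ((m:ℤ)+1) * ((d:ℤ)+1) := by
      have hE2 := hE
      rw [hsumβ, hq] at hE2
      have h3 : (d:ℤ) * (A 0 + (d:ℤ)*β + q) = (d:ℤ) * (((m:ℤ)+1) * ((d:ℤ)+1)) := by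
        linear_combination hE2
      exact mul_left_cancel₀ hdz0 h3
    by_cases hc : (d:ℤ) + 1 ≤ A 0 + q
    · set k : ℤ := max 0 ((d:ℤ) + 1 - A 0) with hkdef
      have hk0 : 0 ≤ k := le_max_left _ _
      have hkd : k ≤ (d:ℤ) + 1 := max_le (by omega) (by have := hA 0; omega)
      have hkq : k ≤ q := max_le hq0 (by omega)
      have hkS : k * d ≤ S := by
        have h4 : k * d ≤ q * d := mul_le_mul_of_nonneg_right hkq (by omega)
        linarith [hq, hb0]
      have hkA : (d:ℤ) + 1 - k ≤ A 0 := by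
        have := le_max_right 0 ((d:ℤ) + 1 - A 0)
        linarith
      refine finish (fun i => if (i:ℕ) = 0 then 1 - k else -k) (k * d) ?_
        (mul_nonneg hk0 (by omega)) hkS ?_ ?_
      · rw [← Finset.add_sum_erase _ _ (Finset.mem_univ (0:Fin d))]
        rw [Finset.sum_congr rfl (fun j hj => if_neg (hne0 j hj)), Finset.sum_const,
          nsmul_eq_mul, hcard, if_pos (Fin.val_zero d)]
        ring
      · intro j; by_cases h : (j:ℕ) = 0
        · rw [if_pos h, Wz, if_pos h]
          have he : ((d:ℤ)+1)*(1-k) + k*d = (d:ℤ)+1-k := by ring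
          linarith
        · rw [if_neg h, Wz, if_neg h]
          have he : (d:ℤ) * (-k) + k * d = 0 := by ring
          linarith
      · intro j; by_cases h : (j:ℕ) = 0
        · have hj : j = 0 := Fin.ext (by simp [h])
          rw [if_pos h, Wz, if_pos h, hj]
          have he : ((d:ℤ)+1)*(1-k) + k*d = (d:ℤ)+1-k := by ring
          linarith
        · rw [if_neg h, Wz, if_neg h]
          have he : (d:ℤ) * (-k) + k * d = 0 := by ring
          linarith [hA j]
    · push_neg at hc
      by_cases hβ : β = 0
      · exfalso
        rw [hβ] at hkey
        have h5 : 2 * ((d:ℤ)+1) ≤ ((m:ℤ)+1) * ((d:ℤ)+1) := by nlinarith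
        have h6 : A 0 + q = ((m:ℤ)+1) * ((d:ℤ)+1) := by linarith [hkey]
        linarith
      · have hβ1 : 1 ≤ β := by omega
        by_cases hq1 : 1 ≤ q
        · refine finish (fun _ => (-1:ℤ)) ((d:ℤ)+1) ?_ (by omega) ?_ ?_ ?_
          · rw [Finset.sum_const, nsmul_eq_mul, Finset.card_univ, Fintype.card_fin]
            push_cast; ring
          · have h4 : (d:ℤ) * 1 ≤ (d:ℤ) * q := mul_le_mul_of_nonneg_left hq1 (by omega)
            linarith [hq]
          · intro j; by_cases h : (j:ℕ) = 0
            · rw [Wz, if_pos h]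
              have he : ((d:ℤ)+1)*(-1) + ((d:ℤ)+1) = 0 := by ring
              linarith
            · rw [Wz, if_neg h]
              have he : (d:ℤ)*(-1) + ((d:ℤ)+1) = 1 := by ring
              linarith
          · intro j; by_cases h : (j:ℕ) = 0
            · have hj : j = 0 := Fin.ext (by simp [h])
              rw [Wz, if_pos h, hj]
              have he : ((d:ℤ)+1)*(-1) + ((d:ℤ)+1) = 0 := by ring
              linarith [hA 0]
            · rw [Wz, if_neg h]
              have he : (d:ℤ)*(-1) + ((d:ℤ)+1) = 1 := by ring
              have := hAβ j h
              linarith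
        · have hq0' : q = 0 := by omega
          by_cases hA0 : 1 ≤ A 0
          · have hS1 : 1 ≤ S := by
              have hSβ : S = β := by rw [hq, hq0']; ring
              omega
            refine finish (fun _ => (0:ℤ)) 1 ?_ (by omega) hS1 ?_ ?_
            · simp
            · intro j; simp
            · intro j; by_cases h : (j:ℕ) = 0
              · have hj : j = 0 := Fin.ext (by simp [h])
                rw [hj]; simpa using hA0
              · have := hAβ j h
                simp only [mul_zero, zero_add, this]
                omega
          · exfalso
            have hA00 : A 0 = 0 := by have := hA 0; omega
            rw [hA00, hq0'] at hkey
            have h5 : ((m:ℤ)+1) = (d:ℤ) * (β - ((m:ℤ)+1)) := by linear_combination (-1 : ℤ) * hkey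
            have h6 : 0 < β - ((m:ℤ)+1) := by
              by_contra h7
              push_neg at h7
              nlinarith [h5]
            have h6' : 1 ≤ β - ((m:ℤ)+1) := by omega
            have h8 : (d:ℤ) * 1 ≤ (d:ℤ) * (β - ((m:ℤ)+1)) :=
              mul_le_mul_of_nonneg_left h6' (by omega)
            linarith [h5, hbd, hmz]

open Pointwise in
lemma main_aux (d : ℕ) (hd : 3 ≤ d) : ∀ m : ℕ, ∀ z : Fin d → ℤ,
    (fun j => ((z j : ℤ):ℝ)) ∈ (((m+1 : ℕ)):ℝ) • convexHull ℝ (Set.range (dVert d)) →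
    ∃ f : Fin (m+1) → Fin d → ℝ,
      (∀ k, f k ∈ convexHull ℝ (Set.range (dVert d)) ∧ isInt (f k)) ∧
      (fun j => ((z j : ℤ):ℝ)) = ∑ k, f k := by
  intro m
  induction m with
  | zero =>
    intro z hz
    refine ⟨fun _ => (fun j => ((z j : ℤ):ℝ)), ?_, ?_⟩
    · intro k
      constructor
      · have h1 : (((0+1 : ℕ)):ℝ) = 1 := by norm_num
        rw [h1, one_smul] at hz
        exact hz
      · exact fun j => ⟨z j, rfl⟩
    · rw [Fin.sum_univ_one]
  | succ m ih =>
    intro z hz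
    have hcast : (((m+1+1 : ℕ)):ℝ) = (((m+1 : ℕ)):ℝ) + 1 := by push_cast; ring
    rw [hcast] at hz
    obtain ⟨y, hy, hzy⟩ := greedy d hd (m+1) (by omega) z hz
    obtain ⟨g, hg, hgsum⟩ := ih (fun j => z j - y j) hzy
    refine ⟨Fin.snoc g (fun j => ((y j : ℤ):ℝ)), ?_, ?_⟩
    · intro k
      refine Fin.lastCases ?_ ?_ k
      · rw [Fin.snoc_last]
        exact ⟨hy, fun j => ⟨y j, rfl⟩⟩
      · intro i
        rw [Fin.snoc_castSucc]
        exact hg i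
    · rw [Fin.sum_univ_castSucc]
      simp only [Fin.snoc_castSucc, Fin.snoc_last]
      rw [← hgsum]
      funext j
      simp only [Pi.add_apply]
      push_cast
      ring

/-- For `d ≥ 3`, the simplex with vertices
`e_1, ..., e_d, (-d, -d-1, ..., -d-1)` is integrally closed. -/
theorem stmt_13 (d : ℕ) (hd : 3 ≤ d) :
    isIntegrallyClosed (convexHull ℝ (Set.range (dVert d))) := by
  intro m hm x hx hxint
  choose zf hzf using hxint
  have hxe : x = fun j => ((zf j : ℤ):ℝ) := funext hzf
  obtain ⟨m', rfl⟩ : ∃ m', m = m' + 1 := ⟨m - 1, by omega⟩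
  rw [hxe] at hx
  obtain ⟨f, hf, hsum⟩ := main_aux d hd m' zf hx
  exact ⟨f, hf, by rw [hxe, hsum]⟩
end

section
/- For d ≥ 3, the h*-vector of the simplex Δ with vertices e_1, ..., e_d, (-d, -d-1, ..., -d-1) in R^d equals (1, d+2, d+2, ..., d+2, 1); in particular it is symmetric and unimodal. -/
open Finset



namespace Stmt14

/-- `g(q) = q - ⌊q/(d+1)⌋ - (d-1)⌊q/d⌋`, as an integer. -/
def gg (d q : ℕ) : ℤ := (q : ℤ) - ((q / (d+1) : ℕ) : ℤ) - ((d : ℤ) - 1) * ((q / d : ℕ) : ℤ)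

/-- value of `g` on a fundamental period. -/
def gp (d r : ℕ) : ℕ := r % d + if r % d < r / d then 1 else 0

lemma gg_period (d q : ℕ) (hd : 1 ≤ d) : gg d (q + d*(d+1)) = gg d q + 1 := by
  unfold gg
  have h1 : (q + d*(d+1)) / (d+1) = q / (d+1) + d := by
    rw [Nat.add_mul_div_right _ _ (Nat.succ_pos d)]
  have h2 : (q + d*(d+1)) / d = q / d + (d+1) := by
    rw [mul_comm, Nat.add_mul_div_right _ _ hd]
  rw [h1, h2]
  push_cast
  ring

lemma gg_mul_add (d p r : ℕ) (hd : 1 ≤ d) : gg d (r + p*(d*(d+1))) = gg d r + p := by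
  induction p with
  | zero => simp
  | succ n ih =>
      have : r + (n+1)*(d*(d+1)) = (r + n*(d*(d+1))) + d*(d+1) := by ring
      rw [this, gg_period _ _ hd, ih]
      push_cast; ring

lemma gg_eq_gp (d r : ℕ) (hd : 1 ≤ d) (hr : r < d*(d+1)) : gg d r = (gp d r : ℤ) := by
  obtain ⟨w, p, hplt, hdm⟩ : ∃ w p, p < d ∧ r = d * w + p :=
    ⟨r / d, r % d, Nat.mod_lt _ hd, (Nat.div_add_mod r d).symm⟩
  have hwd : r / d = w := by
    rw [hdm, Nat.mul_add_div hd, Nat.div_eq_of_lt hplt]; omega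
  have hpd : r % d = p := by
    rw [hdm, Nat.mul_add_mod, Nat.mod_eq_of_lt hplt]
  have hwle : w ≤ d := by
    by_contra h
    push_neg at h
    have : d * (d+1) ≤ d * w := Nat.mul_le_mul_left d h
    omega
  unfold gg gp
  rw [hwd, hpd]
  by_cases h : p < w
  · obtain ⟨k, rfl⟩ : ∃ k, w = k + 1 := ⟨w - 1, by omega⟩
    have hk1 : (r : ℕ) = (p + d - k) + (d+1)*k := by
      have e1 : d * (k+1) = d*k + d := by ring
      have e2 : (d+1)*k = d*k + k := by ring
      omega
    have hdiv : r / (d+1) = k := by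
      rw [hk1, Nat.add_mul_div_left _ _ (Nat.succ_pos d), Nat.div_eq_of_lt (by omega)]
      omega
    rw [hdiv, if_pos h]
    have : (r : ℤ) = d * (k+1) + p := by exact_mod_cast congrArg (Nat.cast (R := ℤ)) hdm
    rw [this]
    push_cast
    ring
  · have hk1 : (r : ℕ) = (p - w) + (d+1)*w := by
      have e2 : (d+1)*w = d*w + w := by ring
      omega
    have hdiv : r / (d+1) = w := by
      rw [hk1, Nat.add_mul_div_left _ _ (Nat.succ_pos d), Nat.div_eq_of_lt (by omega)]
      omega
    rw [hdiv, if_neg h]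
    have : (r : ℤ) = d * w + p := by exact_mod_cast congrArg (Nat.cast (R := ℤ)) hdm
    rw [this]
    push_cast
    ring

lemma gg_decomp (d q : ℕ) (hd : 1 ≤ d) :
    gg d q = ((q / (d*(d+1)) : ℕ) : ℤ) + (gp d (q % (d*(d+1))) : ℤ) := by
  have hN : 0 < d*(d+1) := by positivity
  have h := gg_mul_add d (q / (d*(d+1))) (q % (d*(d+1))) hd
  rw [Nat.mod_add_div' q (d*(d+1))] at h
  rw [h, gg_eq_gp d _ hd (Nat.mod_lt _ hN)]
  ring

lemma gg_nonneg (d q : ℕ) (hd : 1 ≤ d) : 0 ≤ gg d q := by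
  rw [gg_decomp d q hd]; positivity

lemma gp_pos (d r : ℕ) (hd : 1 ≤ d) (h0 : 0 < r) (hr : r < d*(d+1)) : 1 ≤ gp d r := by
  unfold gp
  rcases Nat.eq_zero_or_pos (r % d) with h | h
  · rcases Nat.eq_zero_or_pos (r / d) with h2 | h2
    · exfalso
      have := Nat.div_add_mod r d
      rw [h2, h, Nat.mul_zero] at this
      omega
    · simp [h, h2]
  · omega

lemma gp_lt (d r : ℕ) (hd : 1 ≤ d) : gp d r ≤ d := by
  unfold gp
  have := Nat.mod_lt r hd
  split_ifs <;> omega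

lemma le_mul_gg (d q : ℕ) (hd : 1 ≤ d) : (q : ℤ) ≤ ((d*(d+1) : ℕ) : ℤ) * gg d q := by
  have hN : 0 < d*(d+1) := by positivity
  rw [gg_decomp d q hd]
  set N := d*(d+1) with hNdef
  set P := q / N
  set r := q % N with hrdef
  have h3 : (q:ℤ) = (r : ℤ) + (N:ℤ) * (P:ℤ) := by
    exact_mod_cast congrArg (Nat.cast (R := ℤ)) (Nat.mod_add_div q N).symm
  rw [h3, mul_add]
  rcases Nat.eq_zero_or_pos r with h | h
  · rw [h]
    have : (0:ℤ) ≤ (N:ℤ) * (gp d 0 : ℤ) := by positivity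
    simpa using this
  · have h1 : (1:ℤ) ≤ (gp d r : ℤ) := by
      exact_mod_cast gp_pos d r hd h (hrdef ▸ Nat.mod_lt _ hN)
    have h2 : (r : ℤ) ≤ (N : ℤ) := by exact_mod_cast (Nat.mod_lt _ hN).le
    have h4 : (N:ℤ) ≤ (N:ℤ) * (gp d r : ℤ) :=
      le_mul_of_one_le_right (by positivity) h1
    linarith [mul_comm ((N:ℕ):ℤ) ((P:ℕ):ℤ)]

lemma gg_le_self (d q : ℕ) (hd : 1 ≤ d) : gg d q ≤ q := by
  unfold gg
  have h1 : (0:ℤ) ≤ ((q / (d+1) : ℕ) : ℤ) := by positivity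
  have h2 : (0:ℤ) ≤ ((d:ℤ) - 1) * ((q / d : ℕ) : ℤ) := by
    apply mul_nonneg _ (by positivity)
    have : (1:ℤ) ≤ (d:ℤ) := by exact_mod_cast hd
    linarith
  linarith


lemma gp_zero (d : ℕ) : gp d 0 = 0 := by simp [gp]

/-- inner count over ρ. -/
lemma inner_count (d j w : ℕ) (hw : w ≤ d) :
    ((range d).filter (fun ρ => ρ + (if ρ < w then 1 else 0) ≤ j)).card
      = min j d + (if w ≤ j ∧ j < d then 1 else 0) := by
  by_cases hj : j < d
  · have hfil : (range d).filter (fun ρ => ρ + (if ρ < w then 1 else 0) ≤ j)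
        = (range j) ∪ (if w ≤ j then {j} else ∅) := by
      ext ρ
      by_cases hρw : ρ < w <;> by_cases hwj : w ≤ j <;>
        simp [mem_filter, mem_range, mem_union, hρw, hwj] <;> omega
    rw [hfil]
    by_cases hwj : w ≤ j
    · rw [if_pos hwj, if_pos ⟨hwj, hj⟩]
      rw [Finset.card_union_of_disjoint (by simp [Finset.disjoint_singleton_right, mem_range])]
      simp [min_eq_left hj.le]
    · rw [if_neg hwj, if_neg (by tauto)]
      simp [min_eq_left hj.le]
  · push_neg at hj
    have hfil : (range d).filter (fun ρ => ρ + (if ρ < w then 1 else 0) ≤ j) = range d := by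
      apply Finset.filter_true_of_mem
      intro ρ hρ
      rw [mem_range] at hρ
      split_ifs <;> omega
    rw [hfil, if_neg (by omega)]
    simp [min_eq_right hj]

/-- count of `r` in a period with `gp d r ≤ j`. -/
lemma period_count (d j : ℕ) (hd : 1 ≤ d) :
    ((range (d*(d+1))).filter (fun r => gp d r ≤ j)).card
      = (d+1) * min j d + (if j < d then j + 1 else 0) := by
  have hbij : ((range (d*(d+1))).filter (fun r => gp d r ≤ j)).card
      = (((range (d+1)) ×ˢ (range d)).filter
          (fun p => p.2 + (if p.2 < p.1 then 1 else 0) ≤ j)).card := by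
    apply Finset.card_nbij' (fun r => (r / d, r % d)) (fun p => p.1 * d + p.2)
    · intro r hr
      rw [Finset.mem_coe, mem_filter, mem_range] at hr
      rw [Finset.mem_coe, mem_filter, Finset.mem_product, mem_range, mem_range]
      refine ⟨⟨?_, Nat.mod_lt _ hd⟩, ?_⟩
      · rw [Nat.div_lt_iff_lt_mul hd]
        have e : (d+1)*d = d*(d+1) := by ring
        omega
      · exact hr.2
    · intro p hp
      rw [Finset.mem_coe, mem_filter, Finset.mem_product, mem_range, mem_range] at hp
      rw [Finset.mem_coe, mem_filter, mem_range]
      beta_reduce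
      have hdiv : (p.1 * d + p.2) / d = p.1 := by
        rw [mul_comm, Nat.mul_add_div hd, Nat.div_eq_of_lt hp.1.2]; omega
      have hmod : (p.1 * d + p.2) % d = p.2 := by
        rw [mul_comm, Nat.mul_add_mod, Nat.mod_eq_of_lt hp.1.2]
      constructor
      · have h1 : p.1 * d ≤ d * d := Nat.mul_le_mul_right d (by omega)
        have e : d*(d+1) = d*d + d := by ring
        omega
      · unfold gp
        rw [hdiv, hmod]
        exact hp.2
    · intro r _
      exact Nat.div_add_mod' r d
    · intro p hp
      rw [Finset.mem_coe, mem_filter, Finset.mem_product, mem_range, mem_range] at hp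
      have hdiv : (p.1 * d + p.2) / d = p.1 := by
        rw [mul_comm, Nat.mul_add_div hd, Nat.div_eq_of_lt hp.1.2]; omega
      have hmod : (p.1 * d + p.2) % d = p.2 := by
        rw [mul_comm, Nat.mul_add_mod, Nat.mod_eq_of_lt hp.1.2]
      beta_reduce
      rw [hdiv, hmod]
  rw [hbij, Finset.card_filter, Finset.sum_product]
  have hsum : ∀ w ∈ range (d+1),
      (∑ ρ ∈ range d, if ρ + (if ρ < w then 1 else 0) ≤ j then 1 else 0)
        = min j d + (if w ≤ j ∧ j < d then 1 else 0) := by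
    intro w hw
    rw [mem_range] at hw
    rw [← Finset.card_filter]
    exact inner_count d j w (by omega)
  rw [Finset.sum_congr rfl hsum, Finset.sum_add_distrib, Finset.sum_const, Finset.card_range,
    smul_eq_mul]
  congr 1
  rw [← Finset.card_filter]
  by_cases hj : j < d
  · have h2 : (range (d+1)).filter (fun w => w ≤ j ∧ j < d) = range (j+1) := by
      ext w
      simp only [mem_filter, mem_range]
      omega
    rw [h2, if_pos hj, Finset.card_range]
  · have h2 : (range (d+1)).filter (fun w => w ≤ j ∧ j < d) = ∅ := by
      apply Finset.filter_false_of_mem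
      intro w _
      tauto
    rw [h2, if_neg hj]
    simp

/-- the h*-vector entries (as naturals). -/
def Hn (d k : ℕ) : ℕ := if k = 0 ∨ k = d then 1 else if k < d then d+2 else 0

/-- the cumulative counts. -/
def Gc (d j : ℕ) : ℕ := (d+1) * min j d + (if j < d then j + 1 else 0)

lemma G_cum (d j : ℕ) (hd : 1 ≤ d) : Gc d j = ∑ k ∈ range (j+1), Hn d k := by
  induction j with
  | zero =>
      simp [Gc, Hn]
      omega
  | succ j ih =>
      rw [Finset.sum_range_succ, ← ih]
      unfold Gc Hn
      rcases lt_trichotomy (j+1) d with h | h | h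
      · have e1 : min (j+1) d = j+1 := by omega
        have e2 : min j d = j := by omega
        have e3 : (d+1)*(j+1) = (d+1)*j + (d+1) := by ring
        rw [e1, e2, if_pos h, if_pos (by omega : j < d),
          if_neg (by omega : ¬(j+1 = 0 ∨ j+1 = d)), if_pos h]
        omega
      · have e1 : min (j+1) d = j+1 := by omega
        have e2 : min j d = j := by omega
        have e3 : (d+1)*(j+1) = (d+1)*j + (d+1) := by ring
        rw [e1, e2, if_neg (by omega : ¬ j+1 < d), if_pos (by omega : j < d),
          if_pos (by omega : j+1 = 0 ∨ j+1 = d)]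
        omega
      · have e1 : min (j+1) d = d := by omega
        have e2 : min j d = d := by omega
        rw [e1, e2, if_neg (by omega : ¬ j+1 < d), if_neg (by omega : ¬ j < d),
          if_neg (by omega : ¬(j+1 = 0 ∨ j+1 = d)), if_neg (by omega : ¬ j+1 < d)]
      
lemma fiber_card (d m j : ℕ) (hd : 1 ≤ d) (hj : j ≤ m) :
    ((range (d*(d+1)*m+1)).filter (fun q => gg d q = (j:ℤ))).card
      = ((range (d*(d+1))).filter (fun r => gp d r ≤ j)).card := by
  have hN : 0 < d*(d+1) := by positivity
  apply Finset.card_nbij' (fun q => q % (d*(d+1))) (fun r => r + (j - gp d r)*(d*(d+1)))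
  · intro q hq
    rw [Finset.mem_coe, mem_filter, mem_range] at hq
    rw [Finset.mem_coe, mem_filter, mem_range]
    beta_reduce
    refine ⟨Nat.mod_lt _ hN, ?_⟩
    have hdec := gg_decomp d q hd
    rw [hq.2] at hdec
    obtain ⟨a, ha⟩ : ∃ a, q / (d*(d+1)) = a := ⟨_, rfl⟩
    obtain ⟨b, hb⟩ : ∃ b, gp d (q % (d*(d+1))) = b := ⟨_, rfl⟩
    rw [ha, hb] at hdec
    have : a + b = j := by exact_mod_cast hdec.symm
    omega
  · intro r hr
    rw [Finset.mem_coe, mem_filter, mem_range] at hr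
    rw [Finset.mem_coe, mem_filter, mem_range]
    beta_reduce
    constructor
    · rcases Nat.eq_zero_or_pos r with h0 | h0
      · subst h0
        rw [gp_zero, Nat.sub_zero, zero_add]
        have : j * (d*(d+1)) ≤ m * (d*(d+1)) := Nat.mul_le_mul_right _ hj
        have e : m * (d*(d+1)) = d*(d+1)*m := by ring
        omega
      · have h1 : 1 ≤ gp d r := gp_pos d r hd h0 hr.1
        have h2 : (j - gp d r)*(d*(d+1)) ≤ (j-1)*(d*(d+1)) := Nat.mul_le_mul_right _ (by omega)
        have h3 : 1 ≤ j := le_trans h1 hr.2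
        have h4 : (j-1)*(d*(d+1)) + (d*(d+1)) = j*(d*(d+1)) := by
          obtain ⟨j', rfl⟩ : ∃ j', j = j'+1 := ⟨j-1, by omega⟩
          simp [Nat.succ_sub_one]
          ring
        have h5 : j * (d*(d+1)) ≤ m * (d*(d+1)) := Nat.mul_le_mul_right _ hj
        have e : m * (d*(d+1)) = d*(d+1)*m := by ring
        omega
    · have h6 := gg_mul_add d (j - gp d r) r hd
      rw [h6, gg_eq_gp d r hd hr.1]
      have : ((j - gp d r : ℕ) : ℤ) = (j : ℤ) - (gp d r : ℤ) := by
        rw [Nat.cast_sub hr.2]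
      rw [this]
      ring
  · intro q hq
    rw [Finset.mem_coe, mem_filter, mem_range] at hq
    have hdec := gg_decomp d q hd
    rw [hq.2] at hdec
    obtain ⟨a, ha⟩ : ∃ a, q / (d*(d+1)) = a := ⟨_, rfl⟩
    obtain ⟨b, hb⟩ : ∃ b, gp d (q % (d*(d+1))) = b := ⟨_, rfl⟩
    rw [ha, hb] at hdec
    have h7 : a + b = j := by exact_mod_cast hdec.symm
    have h8 : j - b = a := by omega
    beta_reduce
    rw [hb, h8, ← ha, Nat.mod_add_div']
  · intro r hr
    rw [Finset.mem_coe, mem_filter, mem_range] at hr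
    beta_reduce
    rw [Nat.add_mul_mod_self_right, Nat.mod_eq_of_lt hr.1]

lemma hs_sum (e n : ℕ) : ∑ i ∈ range (n+1), (i+e).choose e = (n+e+1).choose (e+1) := by
  have h := Nat.sum_Icc_choose (n+e) e
  rw [← h, ← Finset.Ico_add_one_right_eq_Icc, Finset.sum_Ico_eq_sum_range]
  have : n + e + 1 - e = n + 1 := by omega
  rw [this]
  apply Finset.sum_congr rfl
  intro i _
  rw [add_comm e i]

lemma at_card (e : ℕ) : ∀ n, (Finset.Nat.antidiagonalTuple (e+1) n).card = (n+e).choose e := by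
  induction e with
  | zero =>
      intro n
      rw [Finset.Nat.antidiagonalTuple_one]
      simp
  | succ k ih =>
      intro n
      have hcard : (Finset.Nat.antidiagonalTuple (k+2) n).card
          = ((range (n+1)).sigma (fun a => Finset.Nat.antidiagonalTuple (k+1) (n-a))).card := by
        apply Finset.card_nbij' (fun y => (⟨y 0, Fin.tail y⟩ : Σ _ : ℕ, (Fin (k+1) → ℕ)))
          (fun p => Fin.cons p.1 p.2)
        · intro y hy
          rw [Finset.mem_coe, Finset.Nat.mem_antidiagonalTuple] at hy
          rw [Finset.mem_coe, Finset.mem_sigma, Finset.mem_range, Finset.Nat.mem_antidiagonalTuple]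
          have hsum : y 0 + ∑ i, Fin.tail y i = n := by
            rw [← hy]
            simp [Fin.sum_univ_succ, Fin.tail]
          dsimp only
          constructor
          · omega
          · omega
        · intro p hp
          rw [Finset.mem_coe, Finset.mem_sigma, Finset.mem_range, Finset.Nat.mem_antidiagonalTuple] at hp
          rw [Finset.mem_coe, Finset.Nat.mem_antidiagonalTuple, Fin.sum_univ_succ]
          simp only [Fin.cons_zero, Fin.cons_succ]
          omega
        · intro y _
          exact Fin.cons_self_tail y
        · intro p hp
          rw [Finset.mem_coe, Finset.mem_sigma] at hp
          ext
          · simp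
          · simp [Fin.tail_cons]
      rw [hcard, Finset.card_sigma]
      have : ∀ a ∈ range (n+1), (Finset.Nat.antidiagonalTuple (k+1) (n-a)).card
          = ((n-a)+k).choose k := fun a _ => ih (n-a)
      rw [Finset.sum_congr rfl this]
      have hrefl := Finset.sum_range_reflect (fun i => (i+k).choose k) (n+1)
      have : ∀ a ∈ range (n+1), ((n-a)+k).choose k = (fun i => (i+k).choose k) (n+1-1-a) := by
        intro a ha
        have e : n+1-1-a = n-a := by omega
        rw [e]
      rw [Finset.sum_congr rfl this, hrefl, hs_sum]
      rfl


lemma icc_choose_sum (d m k : ℕ) (hd : 1 ≤ d) (hk : k ≤ m) :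
    ∑ j ∈ Icc k m, (m-j+(d-1)).choose (d-1) = (m-k+d).choose d := by
  rw [← Finset.Ico_add_one_right_eq_Icc, Finset.sum_Ico_eq_sum_range]
  have e1 : m + 1 - k = (m-k) + 1 := by omega
  rw [e1]
  have e2 : ∀ i ∈ range ((m-k)+1), (m-(k+i)+(d-1)).choose (d-1)
      = (fun t => (t+(d-1)).choose (d-1)) ((m-k)+1-1-i) := by
    intro i hi
    rw [mem_range] at hi
    have : m - (k+i) = (m-k)+1-1-i := by omega
    rw [this]
  rw [Finset.sum_congr rfl e2, Finset.sum_range_reflect (fun t => (t+(d-1)).choose (d-1)) ((m-k)+1),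
    hs_sum]
  congr 1 <;> omega

lemma swap_sum (d m : ℕ) (hd : 1 ≤ d) :
    ∑ j ∈ range (m+1), Gc d j * ((m-j+(d-1)).choose (d-1))
      = ∑ k ∈ range (m+1), Hn d k * ((m-k+d).choose d) := by
  have step1 : ∀ j ∈ range (m+1), Gc d j * ((m-j+(d-1)).choose (d-1))
      = ∑ k ∈ range (m+1), if k ≤ j then Hn d k * ((m-j+(d-1)).choose (d-1)) else 0 := by
    intro j hj
    rw [mem_range] at hj
    rw [G_cum d j hd, Finset.sum_mul]
    have e : range (j+1) = (range (m+1)).filter (fun k => k ≤ j) := by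
      ext k
      simp only [mem_range, mem_filter]
      omega
    rw [e, Finset.sum_filter]
  rw [Finset.sum_congr rfl step1, Finset.sum_comm]
  apply Finset.sum_congr rfl
  intro k hk
  rw [mem_range] at hk
  rw [← Finset.sum_filter]
  have e : (range (m+1)).filter (fun j => k ≤ j) = Icc k m := by
    ext j
    simp only [mem_range, mem_filter, mem_Icc]
    omega
  rw [e, ← Finset.mul_sum, icc_choose_sum d m k hd (by omega)]

lemma master_sum (d m : ℕ) (hd : 1 ≤ d) :
    ∑ q ∈ range (d*(d+1)*m+1),
      (if gg d q ≤ (m:ℤ) then ((m - (gg d q).toNat) + (d-1)).choose (d-1) else 0)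
      = ∑ k ∈ range (m+1), Hn d k * ((m-k+d).choose d) := by
  set F : ℕ → ℕ := fun j => if j ≤ m then ((m - j) + (d-1)).choose (d-1) else 0 with hF
  have step1 : ∀ q ∈ range (d*(d+1)*m+1),
      (if gg d q ≤ (m:ℤ) then ((m - (gg d q).toNat) + (d-1)).choose (d-1) else 0)
        = F ((gg d q).toNat) := by
    intro q _
    rw [hF]
    by_cases h : gg d q ≤ (m:ℤ)
    · rw [if_pos h]
      simp only []
      rw [if_pos (Int.toNat_le.mpr h)]
    · rw [if_neg h]
      simp only []
      rw [if_neg (fun hc => h (Int.toNat_le.mp hc))]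
  have hmaps : ∀ q ∈ range (d*(d+1)*m+1), (gg d q).toNat ∈ range (d*(d+1)*m+1) := by
    intro q hq
    rw [mem_range] at hq ⊢
    have h1 : (gg d q).toNat ≤ q := Int.toNat_le.mpr (gg_le_self d q hd)
    omega
  rw [Finset.sum_congr rfl step1, ← Finset.sum_fiberwise_of_maps_to' hmaps F]
  have step3 : ∀ j ∈ range (d*(d+1)*m+1),
      (∑ q ∈ (range (d*(d+1)*m+1)).filter (fun q => (gg d q).toNat = j), F j)
        = ((range (d*(d+1)*m+1)).filter (fun q => (gg d q).toNat = j)).card * F j := by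
    intro j _
    rw [Finset.sum_const, smul_eq_mul]
  rw [Finset.sum_congr rfl step3]
  have hsub : range (m+1) ⊆ range (d*(d+1)*m+1) := by
    apply Finset.range_subset_range.mpr
    have h1 : 1 ≤ d*(d+1) := Nat.one_le_iff_ne_zero.mpr (by positivity)
    have : 1*m ≤ d*(d+1)*m := Nat.mul_le_mul_right m h1
    omega
  rw [← Finset.sum_subset hsub (by
    intro j hjbig hjsmall
    rw [mem_range] at hjbig hjsmall
    have : ¬ j ≤ m := by omega
    rw [hF]
    simp only []
    rw [if_neg this, Nat.mul_zero])]
  have step5 : ∀ j ∈ range (m+1),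
      ((range (d*(d+1)*m+1)).filter (fun q => (gg d q).toNat = j)).card * F j
        = Gc d j * ((m-j+(d-1)).choose (d-1)) := by
    intro j hj
    rw [mem_range] at hj
    have hfe : (range (d*(d+1)*m+1)).filter (fun q => (gg d q).toNat = j)
        = (range (d*(d+1)*m+1)).filter (fun q => gg d q = (j:ℤ)) := by
      apply Finset.filter_congr
      intro q _
      constructor
      · intro h
        rw [← h, Int.toNat_of_nonneg (gg_nonneg d q hd)]
      · intro h
        rw [h, Int.toNat_natCast]
    have hFj : F j = (m-j+(d-1)).choose (d-1) := by
      rw [hF]; simp only []; rw [if_pos (by omega : j ≤ m)]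
    rw [hfe, fiber_card d m j hd (by omega), period_count d j hd, hFj]
    rfl
  rw [Finset.sum_congr rfl step5]
  exact swap_sum d m hd


section Geometry

open Pointwise

lemma mem_hull_iff {n : ℕ} {ι : Type} [Fintype ι] (v : ι → (Fin n → ℝ)) (x : Fin n → ℝ) :
    x ∈ convexHull ℝ (Set.range v) ↔
      ∃ w : ι → ℝ, (∀ i, 0 ≤ w i) ∧ ∑ i, w i = 1 ∧ ∑ i, w i • v i = x := by
  classical
  constructor
  · intro hx
    rw [convexHull_range_eq_exists_affineCombination] at hx
    obtain ⟨s, w, h0, h1, haff⟩ := hx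
    refine ⟨fun i => if i ∈ s then w i else 0, ?_, ?_, ?_⟩
    · intro i
      by_cases h : i ∈ s
      · simpa [h] using h0 i h
      · simp [h]
    · rw [Finset.sum_ite_mem, Finset.univ_inter, h1]
    · rw [← haff, affineCombination_eq_linear_combination s v w h1]
      have : ∀ i : ι, (if i ∈ s then w i else 0) • v i = if i ∈ s then w i • v i else 0 := by
        intro i
        split_ifs <;> simp
      rw [Finset.sum_congr rfl (fun i _ => this i), Finset.sum_ite_mem, Finset.univ_inter]
  · rintro ⟨w, h0, h1, hx⟩
    exact mem_convexHull_of_exists_fintype w v h0 h1 (fun i => Set.mem_range_self i) hx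


open Pointwise

/-- the coefficient vector for the inequalities. -/
def coefZ (d : ℕ) (j : Fin d) : ℤ := if (j : ℕ) = 0 then (d:ℤ)+1 else (d:ℤ)

/-- the integral form of membership in `m • Δ`. -/
def Zpred (d m : ℕ) (z : Fin d → ℤ) : Prop :=
  (∑ j, z j) ≤ (m:ℤ) ∧ ∀ j, (∑ j', z j') ≤ coefZ d j * z j + m

instance (d m : ℕ) : DecidablePred (Zpred d m) := fun z => by
  unfold Zpred
  infer_instance

lemma dVert_castSucc (d : ℕ) (k j : Fin d) :
    dVert d (Fin.castSucc k) j = if j = k then 1 else 0 := by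
  rw [dVert, Fin.snoc_castSucc]

lemma dVert_last (d : ℕ) (j : Fin d) :
    dVert d (Fin.last d) j = if (j : ℕ) = 0 then -(d : ℝ) else -(d : ℝ) - 1 := by
  rw [dVert, Fin.snoc_last]

lemma dVert_last_eq (d : ℕ) (j : Fin d) :
    dVert d (Fin.last d) j = (-(d:ℝ) - 1) + (if (j : ℕ) = 0 then 1 else 0) := by
  rw [dVert_last]
  split_ifs <;> ring

lemma sum_ite_zero_fin (d : ℕ) (hd : 1 ≤ d) :
    ∑ j : Fin d, (if (j : ℕ) = 0 then (1:ℝ) else 0) = 1 := by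
  have h : ∀ j : Fin d, (if (j : ℕ) = 0 then (1:ℝ) else 0)
      = (if j = (⟨0, by omega⟩ : Fin d) then (1:ℝ) else 0) := by
    intro j
    congr 1
    simp [Fin.ext_iff]
  rw [Finset.sum_congr rfl (fun j _ => h j), Finset.sum_ite_eq' Finset.univ]
  simp

lemma wgt_sum (d : ℕ) (hd : 1 ≤ d) :
    ∑ j : Fin d, dVert d (Fin.last d) j = (d:ℝ) * (-(d:ℝ) - 1) + 1 := by
  rw [Finset.sum_congr rfl (fun j _ => dVert_last_eq d j), Finset.sum_add_distrib,
    sum_ite_zero_fin d hd, Finset.sum_const, Finset.card_univ, Fintype.card_fin]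
  simp [nsmul_eq_mul]

lemma coord_sum (d : ℕ) (c : Fin (d+1) → ℝ) (j : Fin d) :
    ∑ i, c i * dVert d i j = c (Fin.castSucc j) + c (Fin.last d) * dVert d (Fin.last d) j := by
  rw [Fin.sum_univ_castSucc]
  congr 1
  have h : ∀ k : Fin d, c (Fin.castSucc k) * dVert d (Fin.castSucc k) j
      = if j = k then c (Fin.castSucc k) else 0 := by
    intro k
    rw [dVert_castSucc]
    split_ifs <;> simp
  rw [Finset.sum_congr rfl (fun k _ => h k), Finset.sum_ite_eq Finset.univ]
  simp

/-- membership in the `m`-th dilate in terms of weights. -/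
lemma mem_dilate_iff (d m : ℕ) (hd : 1 ≤ d) (x : Fin d → ℝ) :
    x ∈ (m:ℝ) • (convexHull ℝ (Set.range (dVert d))) ↔
      ∃ c : Fin (d+1) → ℝ, (∀ i, 0 ≤ c i) ∧ (∑ i, c i = (m:ℝ)) ∧ ∑ i, c i • dVert d i = x := by
  rcases Nat.eq_zero_or_pos m with hm | hm
  · subst hm
    have hne : (convexHull ℝ (Set.range (dVert d))).Nonempty :=
      ⟨dVert d 0, subset_convexHull _ _ (Set.mem_range_self 0)⟩
    rw [Nat.cast_zero, Set.zero_smul_set hne]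
    constructor
    · intro hx
      rw [Set.mem_zero] at hx
      refine ⟨0, fun i => le_refl 0, by simp, ?_⟩
      simp [hx]
    · rintro ⟨c, h0, h1, hx⟩
      have hz : ∀ i ∈ Finset.univ, c i = 0 := by
        rw [← Finset.sum_eq_zero_iff_of_nonneg (fun i _ => h0 i)]
        simpa using h1
      rw [Set.mem_zero, ← hx]
      apply Finset.sum_eq_zero
      intro i hi
      rw [hz i hi, zero_smul]
  · have hm0 : (m:ℝ) ≠ 0 := by positivity
    rw [Set.mem_smul_set]
    constructor
    · rintro ⟨y, hy, rfl⟩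
      rw [mem_hull_iff] at hy
      obtain ⟨w, h0, h1, hy⟩ := hy
      refine ⟨fun i => (m:ℝ) * w i, fun i => mul_nonneg (by positivity) (h0 i), ?_, ?_⟩
      · rw [← Finset.mul_sum, h1, mul_one]
      · rw [← hy, Finset.smul_sum]
        apply Finset.sum_congr rfl
        intro i _
        dsimp only
        rw [smul_smul]
    · rintro ⟨c, h0, h1, hx⟩
      refine ⟨(m:ℝ)⁻¹ • x, ?_, by rw [smul_smul, mul_inv_cancel₀ hm0, one_smul]⟩
      rw [mem_hull_iff]
      refine ⟨fun i => (m:ℝ)⁻¹ * c i, fun i => mul_nonneg (by positivity) (h0 i), ?_, ?_⟩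
      · rw [← Finset.mul_sum, h1, inv_mul_cancel₀ hm0]
      · rw [← hx, Finset.smul_sum]
        apply Finset.sum_congr rfl
        intro i _
        dsimp only
        rw [smul_smul]


lemma coefZ_cast (d : ℕ) (j : Fin d) :
    ((coefZ d j : ℤ) : ℝ) = if (j : ℕ) = 0 then (d:ℝ)+1 else (d:ℝ) := by
  unfold coefZ
  split_ifs <;> push_cast <;> ring

lemma coefZ_mul_wgt (d : ℕ) (j : Fin d) :
    ((coefZ d j : ℤ) : ℝ) * dVert d (Fin.last d) j = -((d:ℝ)*((d:ℝ)+1)) := by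
  rw [coefZ_cast, dVert_last]
  split_ifs <;> ring

lemma coefZ_pos (d : ℕ) (hd : 1 ≤ d) (j : Fin d) : (0:ℝ) < ((coefZ d j : ℤ) : ℝ) := by
  rw [coefZ_cast]
  have : (1:ℝ) ≤ (d:ℝ) := by exact_mod_cast hd
  split_ifs <;> linarith

lemma key_equiv (d m : ℕ) (hd : 3 ≤ d) :
    {x : Fin d → ℝ | x ∈ (m:ℝ) • convexHull ℝ (Set.range (dVert d)) ∧ isInt x}
      = (fun z : Fin d → ℤ => fun j => ((z j : ℝ))) '' {z | Zpred d m z} := by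
  have hNpos : (0:ℝ) < (d:ℝ)*((d:ℝ)+1) := by positivity
  ext x
  simp only [Set.mem_setOf_eq, Set.mem_image]
  constructor
  · rintro ⟨hx, hint⟩
    choose z hz using hint
    rw [mem_dilate_iff d m (by omega)] at hx
    obtain ⟨c, h0, h1, hc⟩ := hx
    have hxj : ∀ j, x j = c (Fin.castSucc j)
        + c (Fin.last d) * dVert d (Fin.last d) j := by
      intro j
      have e1 : x j = ∑ i, c i * dVert d i j := by
        rw [← hc, Finset.sum_apply]
        apply Finset.sum_congr rfl
        intro i _
        rw [Pi.smul_apply, smul_eq_mul]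
      rw [e1, coord_sum]
    set b := c (Fin.last d) with hbdef
    set sx := ∑ j, x j with hsx
    have hcs : (∑ j : Fin d, c (Fin.castSucc j)) = (m:ℝ) - b := by
      rw [Fin.sum_univ_castSucc] at h1
      linarith [h1]
    have hsum_x : sx = ((m:ℝ) - b) + b * ((d:ℝ) * (-(d:ℝ) - 1) + 1) := by
      rw [hsx, Finset.sum_congr rfl (fun j _ => hxj j), Finset.sum_add_distrib,
        ← Finset.mul_sum, hcs, wgt_sum d (by omega)]
    have hbN : b * ((d:ℝ)*((d:ℝ)+1)) = (m:ℝ) - sx := by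
      rw [hsum_x]; ring
    have hzx : ∀ j, x j = ((z j : ℤ) : ℝ) := hz
    have hs_cast : sx = ((∑ j, z j : ℤ) : ℝ) := by
      rw [hsx]
      push_cast
      exact Finset.sum_congr rfl (fun j _ => hz j)
    refine ⟨z, ⟨?_, ?_⟩, by funext j; exact (hz j).symm⟩
    · have hb0 : 0 ≤ b := h0 _
      have : sx ≤ (m:ℝ) := by nlinarith
      rw [hs_cast] at this
      exact_mod_cast this
    · intro j
      have hkey : ((coefZ d j : ℤ) : ℝ) * x j + ((m:ℝ) - sx)
          = ((coefZ d j : ℤ) : ℝ) * c (Fin.castSucc j) := by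
        rw [hxj j, ← hbN]
        linear_combination b * coefZ_mul_wgt d j
      have h2 : (0:ℝ) ≤ ((coefZ d j : ℤ) : ℝ) * c (Fin.castSucc j) :=
        mul_nonneg (coefZ_pos d (by omega) j).le (h0 _)
      have h3 : sx ≤ ((coefZ d j : ℤ) : ℝ) * x j + (m:ℝ) := by linarith
      rw [hs_cast, hz j] at h3
      exact_mod_cast h3
  · rintro ⟨z, hzp, rfl⟩
    obtain ⟨hz1, hz2⟩ := hzp
    set x : Fin d → ℝ := fun j => ((z j : ℤ) : ℝ) with hxdef
    set sx := ∑ j, x j with hsx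
    have hs_cast : sx = ((∑ j, z j : ℤ) : ℝ) := by
      rw [hsx]
      push_cast
      rfl
    have hsm : sx ≤ (m:ℝ) := by
      rw [hs_cast]
      exact_mod_cast hz1
    set b : ℝ := ((m:ℝ) - sx)/((d:ℝ)*((d:ℝ)+1)) with hbdef
    have hbN : b * ((d:ℝ)*((d:ℝ)+1)) = (m:ℝ) - sx := by
      rw [hbdef]
      field_simp
    have hb0 : 0 ≤ b := div_nonneg (by linarith) hNpos.le
    set c : Fin (d+1) → ℝ :=
      Fin.snoc (fun j => x j - b * dVert d (Fin.last d) j) b with hcdef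
    have hc_cast : ∀ j : Fin d, c (Fin.castSucc j)
        = x j - b * dVert d (Fin.last d) j := by
      intro j
      rw [hcdef, Fin.snoc_castSucc]
    have hc_last : c (Fin.last d) = b := by rw [hcdef, Fin.snoc_last]
    constructor
    · rw [mem_dilate_iff d m (by omega)]
      refine ⟨c, ?_, ?_, ?_⟩
      · intro i
        induction i using Fin.lastCases with
        | last =>
            rw [hc_last]
            exact hb0
        | cast j =>
            rw [hc_cast j]
            have hpos := coefZ_pos d (by omega : 1 ≤ d) j
            have h2 : (0:ℝ) ≤ ((coefZ d j : ℤ) : ℝ) * (x j - b * dVert d (Fin.last d) j) := by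
              have e : ((coefZ d j : ℤ) : ℝ) * (x j - b * dVert d (Fin.last d) j)
                  = ((coefZ d j : ℤ) : ℝ) * x j + ((m:ℝ) - sx) := by
                rw [← hbN]
                linear_combination (-b) * coefZ_mul_wgt d j
              rw [e]
              have h4 : ((∑ j', z j' : ℤ) : ℝ) ≤ ((coefZ d j * z j + m : ℤ) : ℝ) := by
                exact_mod_cast hz2 j
              push_cast at h4
              rw [hs_cast]
              push_cast
              linarith
            have := mul_le_mul_iff_right₀ hpos (b := 0) (c := x j - b * dVert d (Fin.last d) j)
            nlinarith
      · rw [Fin.sum_univ_castSucc, hc_last,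
          Finset.sum_congr rfl (fun j _ => hc_cast j), Finset.sum_sub_distrib,
          ← Finset.mul_sum, wgt_sum d (by omega), ← hsx]
        nlinarith [hbN]
      · funext j
        rw [Finset.sum_apply]
        have e1 : ∀ i : Fin (d+1), (c i • dVert d i) j = c i * dVert d i j := by
          intro i
          rw [Pi.smul_apply, smul_eq_mul]
        rw [Finset.sum_congr rfl (fun i _ => e1 i), coord_sum, hc_cast j, hc_last]
        ring
    · intro j
      exact ⟨z j, rfl⟩


lemma sum_ite_zero_finZ (d : ℕ) (hd : 1 ≤ d) (a : ℤ) :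
    ∑ j : Fin d, (if (j : ℕ) = 0 then a else 0) = a := by
  have h : ∀ j : Fin d, (if (j : ℕ) = 0 then a else 0)
      = (if j = (⟨0, by omega⟩ : Fin d) then a else 0) := by
    intro j
    congr 1
    simp [Fin.ext_iff]
  rw [Finset.sum_congr rfl (fun j _ => h j), Finset.sum_ite_eq' Finset.univ]
  simp

lemma Zpred_u_bound (d m : ℕ) (hd : 3 ≤ d) (z : Fin d → ℤ) (hz : Zpred d m z) :
    (m:ℤ) - (∑ j, z j) ≤ ((d:ℤ)*((d:ℤ)+1)) * m := by
  obtain ⟨hz1, hz2⟩ := hz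
  set sz := ∑ j, z j with hsz
  set wj : Fin d → ℤ := fun j => if (j : ℕ) = 0 then (d:ℤ) else (d:ℤ)+1 with hwj
  have hwpos : ∀ j, 0 ≤ wj j := by
    intro j
    simp only [hwj]
    have : (3:ℤ) ≤ (d:ℤ) := by exact_mod_cast hd
    split_ifs <;> linarith
  have hprod : ∀ j, wj j * coefZ d j = (d:ℤ)*((d:ℤ)+1) := by
    intro j
    simp only [hwj, coefZ]
    split_ifs <;> ring
  have h1 : ∀ j ∈ Finset.univ, wj j * (sz - m) ≤ (d:ℤ)*((d:ℤ)+1) * z j := by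
    intro j _
    have h2 : sz - (m:ℤ) ≤ coefZ d j * z j := by linarith [hz2 j]
    calc wj j * (sz - m) ≤ wj j * (coefZ d j * z j) :=
          mul_le_mul_of_nonneg_left h2 (hwpos j)
      _ = (d:ℤ)*((d:ℤ)+1) * z j := by rw [← mul_assoc, hprod j]
  have hsum := Finset.sum_le_sum h1
  rw [← Finset.sum_mul, ← Finset.mul_sum, ← hsz] at hsum
  have hwsum : ∑ j : Fin d, wj j = (d:ℤ)*((d:ℤ)+1) - 1 := by
    have e : ∀ j : Fin d, wj j = ((d:ℤ)+1) + (if (j : ℕ) = 0 then (-1 : ℤ) else 0) := by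
      intro j
      simp only [hwj]
      split_ifs <;> ring
    rw [Finset.sum_congr rfl (fun j _ => e j), Finset.sum_add_distrib,
      sum_ite_zero_finZ d (by omega), Finset.sum_const, Finset.card_univ, Fintype.card_fin]
    push_cast
    ring
  rw [hwsum] at hsum
  nlinarith [hsum, hz1]

lemma Zpred_bounds (d m : ℕ) (hd : 3 ≤ d) (z : Fin d → ℤ) (hz : Zpred d m z) :
    ∀ j, -(((d:ℤ)+1)*m) ≤ z j ∧ z j ≤ (d:ℤ)*(d:ℤ)*m := by
  have hub := Zpred_u_bound d m hd z hz
  obtain ⟨hz1, hz2⟩ := hz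
  set sz := ∑ j, z j with hsz
  have hdz : (3:ℤ) ≤ (d:ℤ) := by exact_mod_cast hd
  have hm0 : (0:ℤ) ≤ (m:ℤ) := by positivity
  have hlow : ∀ j, -(((d:ℤ)+1)*m) ≤ z j := by
    intro j
    have h2 : sz - (m:ℤ) ≤ coefZ d j * z j := by linarith [hz2 j]
    have h3 : -( ((d:ℤ)*((d:ℤ)+1)) * m) ≤ coefZ d j * z j := by linarith
    have h4 : (d:ℤ) * (-(((d:ℤ)+1)*m)) ≤ (d:ℤ) * z j := by
      rcases le_or_gt 0 (z j) with h | h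
      · nlinarith
      · have hc : (d:ℤ) ≤ coefZ d j := by
          rw [coefZ]; split_ifs <;> linarith
        have : (d:ℤ) * z j ≥ coefZ d j * z j := by nlinarith
        nlinarith
    exact le_of_mul_le_mul_left h4 (by linarith)
  intro j
  refine ⟨hlow j, ?_⟩
  have herase : ∑ i ∈ Finset.univ.erase j, z i ≥ ((d:ℤ)-1) * (-(((d:ℤ)+1)*m)) := by
    have h5 : ∀ i ∈ Finset.univ.erase j, -(((d:ℤ)+1)*m) ≤ z i := fun i _ => hlow i
    have h6 := Finset.sum_le_sum h5
    rw [Finset.sum_const, Finset.card_erase_of_mem (Finset.mem_univ j),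
      Finset.card_univ, Fintype.card_fin] at h6
    have e : ((d - 1 : ℕ) : ℤ) = (d:ℤ) - 1 := by
      have : 1 ≤ d := by omega
      push_cast [this]
      ring
    rw [nsmul_eq_mul, e] at h6
    exact h6
  have hzj : z j = sz - ∑ i ∈ Finset.univ.erase j, z i := by
    rw [hsz, ← Finset.add_sum_erase Finset.univ z (Finset.mem_univ j)]
    ring
  rw [hzj]
  nlinarith

def loB (d m : ℕ) : Fin d → ℤ := fun _ => -(((d:ℤ)+1)*m)
def hiB (d m : ℕ) : Fin d → ℤ := fun _ => (d:ℤ)*(d:ℤ)*m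

noncomputable def Zfin (d m : ℕ) : Finset (Fin d → ℤ) :=
  (Finset.Icc (loB d m) (hiB d m)).filter (Zpred d m)

lemma Zset_eq (d m : ℕ) (hd : 3 ≤ d) : {z | Zpred d m z} = ↑(Zfin d m) := by
  ext z
  simp only [Set.mem_setOf_eq, Zfin, Finset.coe_filter, Finset.mem_Icc]
  constructor
  · intro h
    refine ⟨⟨?_, ?_⟩, h⟩
    · intro j
      exact (Zpred_bounds d m hd z h j).1
    · intro j
      exact (Zpred_bounds d m hd z h j).2
  · tauto


/-- the shift in each coordinate. -/
def ccInt (d q : ℕ) (j : Fin d) : ℤ :=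
  if (j : ℕ) = 0 then ((q/(d+1) : ℕ) : ℤ) else ((q/d : ℕ) : ℤ)

lemma int_div_bound (a : ℤ) (q c : ℕ) (hc : 0 < c) (h : -(q:ℤ) ≤ (c:ℤ) * a) :
    0 ≤ a + ((q/c : ℕ) : ℤ) := by
  by_contra hcon
  push_neg at hcon
  have h1 : a ≤ -((q/c : ℕ) : ℤ) - 1 := by omega
  have h2 : (c:ℤ) * a ≤ (c:ℤ) * (-((q/c : ℕ) : ℤ) - 1) :=
    mul_le_mul_of_nonneg_left h1 (by positivity)
  have h3 : (c:ℤ) * ((q/c : ℕ) : ℤ) + ((q % c : ℕ) : ℤ) = (q:ℤ) := by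
    exact_mod_cast congrArg (Nat.cast (R := ℤ)) (Nat.div_add_mod q c)
  have h4 : ((q % c : ℕ) : ℤ) < (c:ℤ) := by exact_mod_cast Nat.mod_lt _ hc
  have h5 : (0:ℤ) ≤ ((q % c : ℕ) : ℤ) := by positivity
  have e : (c:ℤ) * (-((q/c : ℕ) : ℤ) - 1) = -((c:ℤ) * ((q/c : ℕ) : ℤ)) - c := by ring
  omega

lemma cc_sum (d q : ℕ) (hd : 3 ≤ d) :
    ∑ j : Fin d, ccInt d q j
      = ((q/(d+1) : ℕ) : ℤ) + ((d:ℤ) - 1) * ((q/d : ℕ) : ℤ) := by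
  have e : ∀ j : Fin d, ccInt d q j
      = ((q/d : ℕ) : ℤ) + (if (j : ℕ) = 0 then ((q/(d+1) : ℕ) : ℤ) - ((q/d : ℕ) : ℤ) else 0) := by
    intro j
    unfold ccInt
    split_ifs <;> ring
  rw [Finset.sum_congr rfl (fun j _ => e j), Finset.sum_add_distrib,
    sum_ite_zero_finZ d (by omega), Finset.sum_const, Finset.card_univ, Fintype.card_fin,
    nsmul_eq_mul]
  ring

/-- the target sigma finset. -/
noncomputable def Tfin (d m : ℕ) : Finset (Σ _ : ℕ, (Fin d → ℕ)) :=
  (range (d*(d+1)*m+1)).sigma (fun q =>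
    if gg d q ≤ (m:ℤ) then Finset.Nat.antidiagonalTuple d (m - (gg d q).toNat) else ∅)

lemma card_Zfin (d m : ℕ) (hd : 3 ≤ d) : (Zfin d m).card = (Tfin d m).card := by
  have hd1 : 1 ≤ d := by omega
  apply Finset.card_nbij'
    (i := fun z => ⟨((m:ℤ) - ∑ j, z j).toNat,
      fun j => (z j + ccInt d (((m:ℤ) - ∑ j', z j').toNat) j).toNat⟩)
    (j := fun p => fun j => (p.2 j : ℤ) - ccInt d p.1 j)
  · -- forward membership
    intro z hz
    rw [Finset.mem_coe, Zfin, Finset.mem_filter] at hz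
    obtain ⟨hbox, hzp⟩ := hz
    set q : ℕ := ((m:ℤ) - ∑ j', z j').toNat with hqdef
    have hq : (q:ℤ) = (m:ℤ) - ∑ j', z j' := by
      rw [hqdef, Int.toNat_of_nonneg (by linarith [hzp.1])]
    have hub := Zpred_u_bound d m hd z hzp
    have hqle : q ≤ d*(d+1)*m := by
      have : (q:ℤ) ≤ ((d*(d+1)*m : ℕ) : ℤ) := by
        rw [hq]
        push_cast
        linarith [hub]
      exact_mod_cast this
    -- nonnegativity of the shifted coordinates
    have hy0 : ∀ j, 0 ≤ z j + ccInt d q j := by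
      intro j
      have h2 := hzp.2 j
      unfold ccInt
      unfold coefZ at h2
      split_ifs with hj
      · rw [if_pos hj] at h2
        apply int_div_bound _ _ _ (by omega)
        rw [hq]
        push_cast
        linarith
      · rw [if_neg hj] at h2
        apply int_div_bound _ _ _ (by omega)
        rw [hq]
        linarith
    -- the sum identity
    have hysum : (∑ j, ((z j + ccInt d q j).toNat : ℤ)) = (m:ℤ) - gg d q := by
      have e1 : ∀ j ∈ Finset.univ, ((z j + ccInt d q j).toNat : ℤ) = z j + ccInt d q j :=
        fun j _ => Int.toNat_of_nonneg (hy0 j)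
      rw [Finset.sum_congr rfl e1, Finset.sum_add_distrib, cc_sum d q hd]
      unfold gg
      linarith [hq]
    have hggle : gg d q ≤ (m:ℤ) := by
      have : (0:ℤ) ≤ ∑ j, ((z j + ccInt d q j).toNat : ℤ) :=
        Finset.sum_nonneg (fun j _ => by positivity)
      linarith
    rw [Finset.mem_coe, Tfin, Finset.mem_sigma]
    constructor
    · rw [mem_range]
      dsimp only
      omega
    · rw [if_pos hggle, Finset.Nat.mem_antidiagonalTuple]
      have hgg0 := gg_nonneg d q hd1
      have : (∑ j, ((z j + ccInt d q j).toNat : ℤ)) = ((m - (gg d q).toNat : ℕ) : ℤ) := by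
        rw [hysum]
        have e2 : ((gg d q).toNat : ℤ) = gg d q := Int.toNat_of_nonneg hgg0
        have e3 : (gg d q).toNat ≤ m := by omega
        push_cast [e3]
        omega
      exact_mod_cast this
  · -- backward membership
    intro p hp
    rw [Finset.mem_coe, Tfin, Finset.mem_sigma, mem_range] at hp
    obtain ⟨hq1, hp2⟩ := hp
    by_cases hggle : gg d p.1 ≤ (m:ℤ)
    swap
    · rw [if_neg hggle] at hp2
      exact absurd hp2 (Finset.notMem_empty _)
    rw [if_pos hggle, Finset.Nat.mem_antidiagonalTuple] at hp2
    set q := p.1 with hqdef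
    set y := p.2 with hydef
    have hgg0 := gg_nonneg d q hd1
    -- the sum of z
    have hzsum : (∑ j, ((y j : ℤ) - ccInt d q j)) = (m:ℤ) - q := by
      rw [Finset.sum_sub_distrib, cc_sum d q hd]
      have e1 : (∑ j, (y j : ℤ)) = ((m - (gg d q).toNat : ℕ) : ℤ) := by
        exact_mod_cast congrArg (Nat.cast (R := ℤ)) hp2
      have e2 : ((gg d q).toNat : ℤ) = gg d q := Int.toNat_of_nonneg hgg0
      have e3 : (gg d q).toNat ≤ m := by omega
      rw [e1, Nat.cast_sub e3, e2]
      unfold gg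
      ring
    have hzp : Zpred d m (fun j => (y j : ℤ) - ccInt d q j) := by
      constructor
      · rw [hzsum]
        have : (0:ℤ) ≤ (q:ℤ) := by positivity
        linarith
      · intro j
        rw [hzsum]
        unfold coefZ ccInt
        dsimp only
        split_ifs with hj
        · have h3 : ((d:ℤ)+1) * ((q/(d+1) : ℕ) : ℤ) + ((q % (d+1) : ℕ) : ℤ) = (q:ℤ) := by
            exact_mod_cast congrArg (Nat.cast (R := ℤ)) (Nat.div_add_mod q (d+1))
          have h5 : (0:ℤ) ≤ ((q % (d+1) : ℕ) : ℤ) := by positivity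
          have h6 : (0:ℤ) ≤ ((d:ℤ)+1) * (y j : ℤ) := by positivity
          nlinarith
        · have h3 : (d:ℤ) * ((q/d : ℕ) : ℤ) + ((q % d : ℕ) : ℤ) = (q:ℤ) := by
            exact_mod_cast congrArg (Nat.cast (R := ℤ)) (Nat.div_add_mod q d)
          have h5 : (0:ℤ) ≤ ((q % d : ℕ) : ℤ) := by positivity
          have h6 : (0:ℤ) ≤ (d:ℤ) * (y j : ℤ) := by positivity
          nlinarith
    rw [Finset.mem_coe, Zfin, Finset.mem_filter]
    refine ⟨?_, hzp⟩
    rw [Finset.mem_Icc]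
    constructor
    · intro j
      exact (Zpred_bounds d m hd _ hzp j).1
    · intro j
      exact (Zpred_bounds d m hd _ hzp j).2
  · -- left inverse
    intro z hz
    rw [Finset.mem_coe, Zfin, Finset.mem_filter] at hz
    obtain ⟨hbox, hzp⟩ := hz
    set q : ℕ := ((m:ℤ) - ∑ j', z j').toNat with hqdef
    have hq : (q:ℤ) = (m:ℤ) - ∑ j', z j' := by
      rw [hqdef, Int.toNat_of_nonneg (by linarith [hzp.1])]
    have hy0 : ∀ j, 0 ≤ z j + ccInt d q j := by
      intro j
      have h2 := hzp.2 j
      unfold ccInt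
      unfold coefZ at h2
      split_ifs with hj
      · rw [if_pos hj] at h2
        apply int_div_bound _ _ _ (by omega)
        rw [hq]
        push_cast
        linarith
      · rw [if_neg hj] at h2
        apply int_div_bound _ _ _ (by omega)
        rw [hq]
        linarith
    funext j
    dsimp only
    rw [Int.toNat_of_nonneg (hy0 j)]
    ring
  · -- right inverse
    rintro ⟨q, y⟩ hp
    rw [Finset.mem_coe, Tfin, Finset.mem_sigma, mem_range] at hp
    obtain ⟨hq1, hp2⟩ := hp
    dsimp only at hq1 hp2 ⊢
    by_cases hggle : gg d q ≤ (m:ℤ)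
    swap
    · rw [if_neg hggle] at hp2
      exact absurd hp2 (Finset.notMem_empty _)
    rw [if_pos hggle, Finset.Nat.mem_antidiagonalTuple] at hp2
    have hgg0 := gg_nonneg d q hd1
    have hzsum : (∑ j, ((y j : ℤ) - ccInt d q j)) = (m:ℤ) - q := by
      rw [Finset.sum_sub_distrib, cc_sum d q hd]
      have e1 : (∑ j, (y j : ℤ)) = ((m - (gg d q).toNat : ℕ) : ℤ) := by
        exact_mod_cast congrArg (Nat.cast (R := ℤ)) hp2
      have e2 : ((gg d q).toNat : ℤ) = gg d q := Int.toNat_of_nonneg hgg0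
      have e3 : (gg d q).toNat ≤ m := by omega
      rw [e1, Nat.cast_sub e3, e2]
      unfold gg
      ring
    have hfst : ((m:ℤ) - ∑ j, ((y j : ℤ) - ccInt d q j)).toNat = q := by
      rw [hzsum]
      omega
    rw [hfst]
    congr 1
    funext j
    rw [sub_add_cancel, Int.toNat_natCast]

lemma card_Tfin (d m : ℕ) (hd : 3 ≤ d) :
    (Tfin d m).card = ∑ k ∈ range (m+1), Hn d k * ((m-k+d).choose d) := by
  rw [Tfin, Finset.card_sigma, ← master_sum d m (by omega)]
  apply Finset.sum_congr rfl
  intro q _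
  by_cases h : gg d q ≤ (m:ℤ)
  · rw [if_pos h, if_pos h]
    obtain ⟨e, rfl⟩ : ∃ e, d = e + 1 := ⟨d-1, by omega⟩
    rw [at_card]
    simp
  · rw [if_neg h, if_neg h, Finset.card_empty]

lemma ncard_eq (d m : ℕ) (hd : 3 ≤ d) :
    ({x : Fin d → ℝ | x ∈ (m:ℝ) • convexHull ℝ (Set.range (dVert d)) ∧ isInt x}).ncard
      = ∑ k ∈ range (m+1), Hn d k * ((m-k+d).choose d) := by
  rw [key_equiv d m hd, Zset_eq d m hd]
  have hinj : Function.Injective (fun z : Fin d → ℤ => fun j => ((z j : ℤ) : ℝ)) := by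
    intro a b h
    funext j
    have h4 := congrFun h j
    dsimp only at h4
    exact_mod_cast h4
  rw [Set.ncard_image_of_injective _ hinj, Set.ncard_coe_finset, card_Zfin d m hd,
    card_Tfin d m hd]

lemma ehr_series (d : ℕ) (hd : 3 ≤ d) :
    ehr (convexHull ℝ (Set.range (dVert d)))
      = PowerSeries.mk (fun k => (Hn d k : ℚ)) * (PowerSeries.invOneSubPow ℚ (d+1)).val := by
  ext m
  rw [ehr, PowerSeries.coeff_mk, PowerSeries.coeff_mul,
    PowerSeries.invOneSubPow_val_succ_eq_mk_add_choose]
  simp only [PowerSeries.coeff_mk]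
  rw [Finset.Nat.sum_antidiagonal_eq_sum_range_succ_mk, ncard_eq d m hd]
  push_cast
  apply Finset.sum_congr rfl
  intro k _
  rw [Nat.add_comm d (m-k)]

end Geometry

end Stmt14

/-- For `d ≥ 3`, the h*-vector of the simplex with vertices
`e_1, ..., e_d, (-d, -d-1, ..., -d-1)` equals `(1, d+2, d+2, ..., d+2, 1)`. -/
theorem stmt_14 (d : ℕ) (hd : 3 ≤ d) (hs : Polynomial ℚ)
    (hrel : (hs : PowerSeries ℚ) =
      ehr (convexHull ℝ (Set.range (dVert d))) * (1 - PowerSeries.X) ^ (d + 1)) :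
    ∀ k ≤ d, hs.coeff k = if k = 0 ∨ k = d then 1 else (d : ℚ) + 2 := by
  intro k hk
  have h1 : (hs : PowerSeries ℚ) = PowerSeries.mk (fun k => (Stmt14.Hn d k : ℚ)) := by
    rw [hrel, Stmt14.ehr_series d hd, mul_assoc,
      ← PowerSeries.invOneSubPow_inv_eq_one_sub_pow,
      (PowerSeries.invOneSubPow ℚ (d+1)).val_inv, mul_one]
  have h2 : hs.coeff k = (Stmt14.Hn d k : ℚ) := by
    have h3 := congrArg (PowerSeries.coeff k) h1
    rwa [Polynomial.coeff_coe, PowerSeries.coeff_mk] at h3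
  rw [h2]
  unfold Stmt14.Hn
  by_cases h : k = 0 ∨ k = d
  · rw [if_pos h, if_pos h]
    norm_num
  · rw [if_neg h, if_neg h, if_pos (by omega : k < d)]
    push_cast
    ring
end

section
/- Any (d+1)×(d+1) matrix M over a field with the property that M is lower triangular with respect to some ordering of rows and columns and has at least one zero on the diagonal is singular; in particular, for the simplex Δ_Q with Q = (1, d, d+1, ..., d+1), the multiplication-by-l map from degree 1 to degree 2 in R_{Δ_Q} is not injective for any linear form l, so R_{Δ_Q} admits no weak Lefschetz element. -/
/-- The lattice points of the fundamental parallelepiped of `Δ_Q`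
(`Q = (1, d, d+1, ..., d+1)`) at height `r`: `pt d i r` is the point `v_{i,r}`
from the paper (forgetting the last coordinate, which is `r`). -/
noncomputable def pt (d i r : ℕ) : Fin d → ℝ :=
  fun j => if i ≤ r then -(i : ℝ) else if (j : ℕ) = 0 then -(i : ℝ) + 2 else -(i : ℝ) + 1


lemma ptNe (d k i j : ℕ) (hd : 3 ≤ d)
    (hcon : j < k ∨ (j = 2 ∧ k = 2)) :
    pt d k 1 + pt d i 1 ≠ pt d j 2 := by
  intro h
  have e0 := congrFun h ⟨0, by omega⟩
  have e1 := congrFun h ⟨1, by omega⟩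
  simp only [pt, Pi.add_apply] at e0 e1
  norm_num at e0 e1
  have hjk : (j : ℝ) < k ∨ ((j : ℝ) = 2 ∧ (k : ℝ) = 2 ∧ j = 2 ∧ k = 2) := by
    rcases hcon with h' | ⟨h1, h2⟩
    · exact Or.inl (by exact_mod_cast h')
    · exact Or.inr ⟨by simp [h1], by simp [h2], h1, h2⟩
  split_ifs at e0 e1 with h1 h2 h3 h4 h5 h6 h7 h8 <;>
    rcases hjk with hjk | ⟨hj, hk, hj', hk'⟩ <;>
    first
      | (have hi : (1 : ℝ) < i := by exact_mod_cast (by omega : (1:ℕ) < i)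
         linarith)
      | (have hkr : (1 : ℝ) < k := by exact_mod_cast (by omega : (1:ℕ) < k)
         linarith)
      | (have hjr : (2 : ℝ) < j := by exact_mod_cast (by omega : (2:ℕ) < j)
         linarith)
      | (have hir : (i : ℝ) ≤ 1 := by exact_mod_cast (by omega : i ≤ 1)
         linarith)
      | linarith
      | omega

lemma tri_det {F : Type} [Field F] {N : ℕ} (M : Matrix (Fin N) (Fin N) F)
    (σ τ : Equiv.Perm (Fin N))
    (h : ∀ i j : Fin N, i < j → M (σ i) (τ j) = 0) (h0 : ∃ i, M (σ i) (τ i) = 0) :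
    M.det = 0 := by
  have hbt : (M.submatrix σ τ).BlockTriangular OrderDual.toDual := fun i j hij => h _ _ hij
  have hM' : (M.submatrix σ τ).det = 0 := by
    rw [Matrix.det_of_lowerTriangular _ hbt]
    obtain ⟨i, hi⟩ := h0
    exact Finset.prod_eq_zero (Finset.mem_univ i) hi
  have heq : M.submatrix σ τ = (M.submatrix id τ).submatrix σ id := rfl
  rw [heq, Matrix.det_permute, Matrix.det_permute'] at hM'
  have hs : ∀ (u : ℤˣ), ((u : ℤ) : F) ≠ 0 := by
    intro u; rcases Int.units_eq_one_or u with h' | h' <;> simp [h']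
  rcases mul_eq_zero.1 hM' with h' | h'
  · exact absurd h' (hs _)
  · rcases mul_eq_zero.1 h' with h'' | h''
    · exact absurd h'' (hs _)
    · exact h''

/-- Any square matrix over a field that is lower triangular with respect
to some ordering of its rows and columns and has a zero on the diagonal is singular; in
particular, for the simplex `Δ_Q` with `Q = (1, d, d+1, ..., d+1)` (`d ≥ 3`), the
multiplication map `[R_{Δ_Q}]_1 → [R_{Δ_Q}]_2` by any linear form
`l = Σ aᵢ x^{v_{i,1}} z` (expressed in the bases of fundamental-parallelepiped lattice
points `v_{k,1}` and `v_{j,2}`) is not injective, so `R_{Δ_Q}` admits no weak Lefschetz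
element. -/
theorem stmt_15 :
    (∀ (F : Type) [Field F] (N : ℕ) (M : Matrix (Fin N) (Fin N) F)
        (σ τ : Equiv.Perm (Fin N)),
        (∀ i j : Fin N, i < j → M (σ i) (τ j) = 0) → (∃ i, M (σ i) (τ i) = 0) →
        M.det = 0) ∧
    (∀ d : ℕ, 3 ≤ d → ∀ a : Fin (d+2) → ℂ,
      ¬ Function.Injective
        ((Matrix.of fun jj kk : Fin (d+2) =>
          ∑ ii : Fin (d+2),
            if pt d (kk : ℕ) 1 + pt d (ii : ℕ) 1 = pt d (jj : ℕ) 2 then a ii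
            else 0).mulVec)) := by
  constructor
  · intro F _ N M σ τ h h0
    exact tri_det M σ τ h h0
  · intro d hd a hinj
    set M : Matrix (Fin (d+2)) (Fin (d+2)) ℂ :=
      Matrix.of fun jj kk : Fin (d+2) =>
        ∑ ii : Fin (d+2),
          if pt d (kk : ℕ) 1 + pt d (ii : ℕ) 1 = pt d (jj : ℕ) 2 then a ii else 0 with hM
    have hzero : ∀ jj kk : Fin (d+2), ((jj : ℕ) < kk ∨ ((jj : ℕ) = 2 ∧ (kk : ℕ) = 2)) →
        M jj kk = 0 := by
      intro jj kk hcon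
      show (∑ ii : Fin (d+2),
          if pt d (kk : ℕ) 1 + pt d (ii : ℕ) 1 = pt d (jj : ℕ) 2 then a ii else 0) = 0
      exact Finset.sum_eq_zero fun ii _ => if_neg (ptNe d kk ii jj hd hcon)
    have hdet : M.det = 0 := by
      apply tri_det M (Equiv.refl _) (Equiv.refl _)
      · intro i j hij
        exact hzero i j (Or.inl hij)
      · exact ⟨⟨2, by omega⟩, hzero ⟨2, by omega⟩ ⟨2, by omega⟩ (Or.inr ⟨rfl, rfl⟩)⟩
    obtain ⟨v, hv, hmv⟩ := (Matrix.exists_mulVec_eq_zero_iff).2 hdet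
    exact hv (hinj (by rw [hmv, Matrix.mulVec_zero]))
end
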